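/- arXiv:2605.16868 — 4 statements merged into one kernel-verified Lean document; each statement's English description precedes it below -/
import Mathlib

section
/- Let T > 0, let F be a reflection kernel with bounded parameters (γ, k), and let X ∈ D_T(L1). Then ‖Ψ_F(X)‖_{T,1} ≤ k ‖X‖_{T,1} / (1 − γ). -/
open MeasureTheory Set Filter
open scoped ENNReal NNReal

noncomputable section

/-- Operator norm of a kernel: `‖F‖_op = sup_{v ∈ [0,1]} ∫₀¹ |F(u,v)| du`. -/
def kernelOpNorm (F : ℝ → ℝ → ℝ) : ℝ≥0∞ :=
  ⨆ v ∈ Icc (0:ℝ) 1, ∫⁻ u in Icc (0:ℝ) 1, ENNReal.ofReal |F u v|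

/-- Composition of kernels. -/
def kernelComp (F G : ℝ → ℝ → ℝ) : ℝ → ℝ → ℝ :=
  fun u v => ∫ w in Icc (0:ℝ) 1, F u w * G w v

/-- `kernelIter F (n-1)` is the `n`-fold composition `F^(n)`; so `kernelIter F 0 = F^(1) = F`. -/
def kernelIter (F : ℝ → ℝ → ℝ) : ℕ → ℝ → ℝ → ℝ
  | 0 => F
  | n + 1 => kernelComp F (kernelIter F n)

/-- Spatial action of a kernel on `f : [0,1] × [0,T] → ℝ`. -/
def kernelApply (F f : ℝ → ℝ → ℝ) : ℝ → ℝ → ℝ :=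
  fun u t => ∫ v in Icc (0:ℝ) 1, F u v * f v t

/-- `sup_{0 ≤ t ≤ T} |f_u(t)|`, valued in `ℝ≥0∞`. -/
def pathSup (T : ℝ) (f : ℝ → ℝ → ℝ) (u : ℝ) : ℝ≥0∞ :=
  ⨆ t ∈ Icc (0:ℝ) T, ENNReal.ofReal |f u t|

/-- `‖f‖_{T,1} = ∫₀¹ sup_{0 ≤ t ≤ T} |f_u(t)| du`, valued in `ℝ≥0∞`. -/
def TNorm (T : ℝ) (f : ℝ → ℝ → ℝ) : ℝ≥0∞ :=
  ∫⁻ u in Icc (0:ℝ) 1, pathSup T f u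

/-- `f ∈ D_T(L1)`. -/
structure MemDT (T : ℝ) (f : ℝ → ℝ → ℝ) : Prop where
  rightCont : ∀ u ∈ Icc (0:ℝ) 1, ∀ t ∈ Ico (0:ℝ) T, ContinuousWithinAt (f u) (Ici t) t
  leftLim : ∀ u ∈ Icc (0:ℝ) 1, ∀ t ∈ Ioc (0:ℝ) T,
    ∃ L : ℝ, Tendsto (f u) (nhdsWithin t (Iio t)) (nhds L)
  meas : ∀ t ∈ Icc (0:ℝ) T, Measurable fun u => f u t
  finite : TNorm T f ≠ ⊤

/-- `f ∈ D_T^↑(L1)`. -/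
structure MemDTup (T : ℝ) (f : ℝ → ℝ → ℝ) : Prop where
  memDT : MemDT T f
  nonneg_zero : ∀ u ∈ Icc (0:ℝ) 1, 0 ≤ f u 0
  mono : ∀ u ∈ Icc (0:ℝ) 1, MonotoneOn (f u) (Icc (0:ℝ) T)

/-- `F` is a reflection kernel with bounded parameters `(γ, k)`. -/
structure IsReflKernel (F : ℝ → ℝ → ℝ) (γ : ℝ) (k : ℕ) : Prop where
  meas : Measurable (Function.uncurry F)
  nonneg : ∀ u ∈ Icc (0:ℝ) 1, ∀ v ∈ Icc (0:ℝ) 1, 0 ≤ F u v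
  opNorm_le_one : kernelOpNorm F ≤ 1
  gamma_mem : γ ∈ Set.Ioo (0:ℝ) 1
  k_pos : 1 ≤ k
  iter_le : kernelOpNorm (kernelIter F (k - 1)) ≤ ENNReal.ofReal γ

/-- The map `π_{X,F}`: `π_{X,F}(W)_u(t) = sup_{0 ≤ s ≤ t} max(−X_u(s) + (F W)_u(s), 0)`. -/
def piMap (X F W : ℝ → ℝ → ℝ) : ℝ → ℝ → ℝ :=
  fun u t => ⨆ s : Icc (0:ℝ) t, max (-(X u s.1) + kernelApply F W u s.1) 0

end

noncomputable section

/-- `Y = Ψ_F(X)`: `Y` is the (unique) fixed point of `π_{X,F}` in `D_T^↑(L1)`. -/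
def IsRegulator (T : ℝ) (X F Y : ℝ → ℝ → ℝ) : Prop :=
  MemDTup T Y ∧ ∀ u ∈ Icc (0:ℝ) 1, ∀ t ∈ Icc (0:ℝ) T, Y u t = piMap X F Y u t

end

namespace RegAux

noncomputable section

def OpE (F : ℝ → ℝ → ℝ) (h : ℝ → ℝ≥0∞) : ℝ → ℝ≥0∞ :=
  fun u => ∫⁻ v in Icc (0:ℝ) 1, ENNReal.ofReal (F u v) * h v

def PhiIter (F : ℝ → ℝ → ℝ) : ℕ → ℝ → ℝ → ℝ≥0∞
  | 0 => fun u v => ENNReal.ofReal (F u v)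
  | n+1 => fun u v => ∫⁻ w in Icc (0:ℝ) 1, ENNReal.ofReal (F u w) * PhiIter F n w v

variable {F : ℝ → ℝ → ℝ}

lemma measurable_PhiIter (hF : Measurable (Function.uncurry F)) (n : ℕ) :
    Measurable (Function.uncurry (PhiIter F n)) := by
  induction n with
  | zero => exact ENNReal.measurable_ofReal.comp hF
  | succ n ih =>
      have : Measurable (fun p : (ℝ × ℝ) × ℝ =>
          ENNReal.ofReal (F p.1.1 p.2) * PhiIter F n p.2 p.1.2) := by
        apply Measurable.mul
        · exact (ENNReal.measurable_ofReal.comp hF).comp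
            (measurable_fst.fst.prodMk measurable_snd)
        · exact ih.comp (measurable_snd.prodMk measurable_fst.snd)
      exact this.lintegral_prod_right'

lemma col_le_one (hop : kernelOpNorm F ≤ 1) {v : ℝ} (hv : v ∈ Icc (0:ℝ) 1) :
    ∫⁻ u in Icc (0:ℝ) 1, ENNReal.ofReal (F u v) ≤ 1 := by
  calc ∫⁻ u in Icc (0:ℝ) 1, ENNReal.ofReal (F u v)
      ≤ ∫⁻ u in Icc (0:ℝ) 1, ENNReal.ofReal |F u v| :=
        lintegral_mono fun u => ENNReal.ofReal_le_ofReal (le_abs_self _)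
    _ ≤ kernelOpNorm F := le_biSup (fun v => ∫⁻ u in Icc (0:ℝ) 1, ENNReal.ofReal |F u v|) hv
    _ ≤ 1 := hop

lemma PhiIter_col_le_one (hF : Measurable (Function.uncurry F))
    (hop : kernelOpNorm F ≤ 1) (n : ℕ) {v : ℝ} (hv : v ∈ Icc (0:ℝ) 1) :
    ∫⁻ u in Icc (0:ℝ) 1, PhiIter F n u v ≤ 1 := by
  induction n with
  | zero => exact col_le_one hop hv
  | succ n ih =>
      have hmeas : AEMeasurable (Function.uncurry fun u w =>
          ENNReal.ofReal (F u w) * PhiIter F n w v)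
          ((volume.restrict (Icc (0:ℝ) 1)).prod (volume.restrict (Icc (0:ℝ) 1))) := by
        apply Measurable.aemeasurable
        exact ((ENNReal.measurable_ofReal.comp hF).comp
            (measurable_fst.prodMk measurable_snd)).mul
          ((measurable_PhiIter hF n).comp (measurable_snd.prodMk measurable_const))
      calc ∫⁻ u in Icc (0:ℝ) 1, PhiIter F (n+1) u v
          = ∫⁻ w in Icc (0:ℝ) 1, ∫⁻ u in Icc (0:ℝ) 1,
              ENNReal.ofReal (F u w) * PhiIter F n w v := by
            exact lintegral_lintegral_swap hmeas
        _ = ∫⁻ w in Icc (0:ℝ) 1,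
              (∫⁻ u in Icc (0:ℝ) 1, ENNReal.ofReal (F u w)) * PhiIter F n w v := by
            refine lintegral_congr fun w => ?_
            exact lintegral_mul_const _ (by
              exact ENNReal.measurable_ofReal.comp (hF.comp (measurable_id.prodMk measurable_const)))
        _ ≤ ∫⁻ w in Icc (0:ℝ) 1, 1 * PhiIter F n w v := by
            refine lintegral_mono_ae ?_
            filter_upwards [ae_restrict_mem measurableSet_Icc] with w hw
            exact mul_le_mul_left (col_le_one hop hw) _
        _ = ∫⁻ w in Icc (0:ℝ) 1, PhiIter F n w v := by simp
        _ ≤ 1 := ih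

end
noncomputable section
variable {F : ℝ → ℝ → ℝ}

lemma kernelIter_corr (hF : Measurable (Function.uncurry F))
    (hnn : ∀ u ∈ Icc (0:ℝ) 1, ∀ v ∈ Icc (0:ℝ) 1, 0 ≤ F u v)
    (hop : kernelOpNorm F ≤ 1) (n : ℕ) {v : ℝ} (hv : v ∈ Icc (0:ℝ) 1) :
    ∀ᵐ u ∂(volume.restrict (Icc (0:ℝ) 1)),
      kernelIter F n u v = (PhiIter F n u v).toReal ∧ PhiIter F n u v ≠ ⊤ := by
  induction n with
  | zero =>
      filter_upwards [ae_restrict_mem measurableSet_Icc] with u hu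
      refine ⟨?_, ENNReal.ofReal_ne_top⟩
      simp [kernelIter, PhiIter, ENNReal.toReal_ofReal (hnn u hu v hv)]
  | succ n ih =>
      have hsec : Measurable fun u => PhiIter F (n+1) u v :=
        (measurable_PhiIter hF (n+1)).comp (measurable_id.prodMk measurable_const)
      have hfin : ∀ᵐ u ∂(volume.restrict (Icc (0:ℝ) 1)), PhiIter F (n+1) u v < ⊤ :=
        ae_lt_top hsec (lt_of_le_of_lt (PhiIter_col_le_one hF hop (n+1) hv) ENNReal.one_lt_top).ne
      filter_upwards [hfin, ae_restrict_mem measurableSet_Icc] with u hufin hu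
      have hsecn : Measurable fun w => PhiIter F n w v :=
        (measurable_PhiIter hF n).comp (measurable_id.prodMk measurable_const)
      have h1 : ∀ᵐ w ∂(volume.restrict (Icc (0:ℝ) 1)),
          ENNReal.ofReal (F u w * kernelIter F n w v)
            = ENNReal.ofReal (F u w) * PhiIter F n w v
          ∧ 0 ≤ F u w * kernelIter F n w v
          ∧ F u w * kernelIter F n w v = F u w * (PhiIter F n w v).toReal := by
        filter_upwards [ih, ae_restrict_mem measurableSet_Icc] with w hw hwI
        obtain ⟨hweq, hwne⟩ := hw
        have hFnn : 0 ≤ F u w := hnn u hu w hwI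
        refine ⟨?_, ?_, by rw [hweq]⟩
        · rw [hweq, ENNReal.ofReal_mul hFnn, ENNReal.ofReal_toReal hwne]
        · exact mul_nonneg hFnn (hweq ▸ ENNReal.toReal_nonneg)
      have hmeas2 : Measurable fun w => F u w * (PhiIter F n w v).toReal :=
        (hF.comp (measurable_const.prodMk measurable_id)).mul
          (ENNReal.measurable_toReal.comp hsecn)
      have hint : Integrable (fun w => F u w * kernelIter F n w v)
          (volume.restrict (Icc (0:ℝ) 1)) := by
        constructor
        · exact hmeas2.aestronglyMeasurable.congr
            (by filter_upwards [h1] with w hw using hw.2.2.symm)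
        · rw [hasFiniteIntegral_iff_ofReal
            (by filter_upwards [h1] with w hw using hw.2.1)]
          calc ∫⁻ w in Icc (0:ℝ) 1, ENNReal.ofReal (F u w * kernelIter F n w v)
              = ∫⁻ w in Icc (0:ℝ) 1, ENNReal.ofReal (F u w) * PhiIter F n w v :=
                lintegral_congr_ae (by filter_upwards [h1] with w hw using hw.1)
            _ < ⊤ := hufin
      have hofReal : ENNReal.ofReal (kernelIter F (n+1) u v) = PhiIter F (n+1) u v := by
        show ENNReal.ofReal (∫ w in Icc (0:ℝ) 1, F u w * kernelIter F n w v) = _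
        rw [ofReal_integral_eq_lintegral_ofReal hint
          (by filter_upwards [h1] with w hw using hw.2.1)]
        exact lintegral_congr_ae (by filter_upwards [h1] with w hw using hw.1)
      have hnnint : 0 ≤ kernelIter F (n+1) u v :=
        integral_nonneg_of_ae (by filter_upwards [h1] with w hw using hw.2.1)
      refine ⟨?_, hufin.ne⟩
      rw [← hofReal, ENNReal.toReal_ofReal hnnint]

end
noncomputable section
variable {F : ℝ → ℝ → ℝ}

lemma OpE_measurable (hF : Measurable (Function.uncurry F)) {h : ℝ → ℝ≥0∞}
    (hh : Measurable h) : Measurable (OpE F h) := by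
  have : Measurable (fun p : ℝ × ℝ => ENNReal.ofReal (F p.1 p.2) * h p.2) :=
    (ENNReal.measurable_ofReal.comp hF).mul (hh.comp measurable_snd)
  exact this.lintegral_prod_right'

lemma measurable_OpE_iter (hF : Measurable (Function.uncurry F)) {h : ℝ → ℝ≥0∞}
    (hh : Measurable h) (n : ℕ) : Measurable ((OpE F)^[n] h) := by
  induction n with
  | zero => exact hh
  | succ n ih => rw [Function.iterate_succ_apply']; exact OpE_measurable hF ih

lemma PhiIter_col_le_gamma {γ : ℝ} {k : ℕ} (hF : Measurable (Function.uncurry F))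
    (hnn : ∀ u ∈ Icc (0:ℝ) 1, ∀ v ∈ Icc (0:ℝ) 1, 0 ≤ F u v)
    (hop : kernelOpNorm F ≤ 1)
    (hiter : kernelOpNorm (kernelIter F (k - 1)) ≤ ENNReal.ofReal γ)
    {v : ℝ} (hv : v ∈ Icc (0:ℝ) 1) :
    ∫⁻ u in Icc (0:ℝ) 1, PhiIter F (k-1) u v ≤ ENNReal.ofReal γ := by
  calc ∫⁻ u in Icc (0:ℝ) 1, PhiIter F (k-1) u v
      ≤ ∫⁻ u in Icc (0:ℝ) 1, ENNReal.ofReal |kernelIter F (k-1) u v| := by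
        refine lintegral_mono_ae ?_
        filter_upwards [kernelIter_corr hF hnn hop (k-1) hv] with u hu
        calc PhiIter F (k-1) u v = ENNReal.ofReal (kernelIter F (k-1) u v) := by
              rw [hu.1, ENNReal.ofReal_toReal hu.2]
          _ ≤ ENNReal.ofReal |kernelIter F (k-1) u v| :=
              ENNReal.ofReal_le_ofReal (le_abs_self _)
    _ ≤ kernelOpNorm (kernelIter F (k-1)) :=
        le_biSup (fun v => ∫⁻ u in Icc (0:ℝ) 1, ENNReal.ofReal |kernelIter F (k-1) u v|) hv
    _ ≤ ENNReal.ofReal γ := hiter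

lemma OpE_iter_succ (hF : Measurable (Function.uncurry F)) {h : ℝ → ℝ≥0∞}
    (hh : Measurable h) (n : ℕ) (u : ℝ) :
    (OpE F)^[n+1] h u = ∫⁻ v in Icc (0:ℝ) 1, PhiIter F n u v * h v := by
  induction n generalizing u with
  | zero => rfl
  | succ n ih =>
      have hsecn : ∀ w, Measurable fun v => PhiIter F n w v * h v := fun w =>
        ((measurable_PhiIter hF n).comp (measurable_const.prodMk measurable_id)).mul hh
      calc (OpE F)^[n+2] h u
          = ∫⁻ w in Icc (0:ℝ) 1, ENNReal.ofReal (F u w) * (OpE F)^[n+1] h w := by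
            rw [Function.iterate_succ_apply']; rfl
        _ = ∫⁻ w in Icc (0:ℝ) 1, ∫⁻ v in Icc (0:ℝ) 1,
              ENNReal.ofReal (F u w) * (PhiIter F n w v * h v) := by
            refine lintegral_congr fun w => ?_
            rw [ih w, lintegral_const_mul _ (hsecn w)]
        _ = ∫⁻ v in Icc (0:ℝ) 1, ∫⁻ w in Icc (0:ℝ) 1,
              ENNReal.ofReal (F u w) * (PhiIter F n w v * h v) := by
            refine lintegral_lintegral_swap (Measurable.aemeasurable ?_)
            exact ((ENNReal.measurable_ofReal.comp
                (hF.comp (measurable_const.prodMk measurable_fst))).mul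
              (((measurable_PhiIter hF n).comp
                (measurable_fst.prodMk measurable_snd)).mul (hh.comp measurable_snd)))
        _ = ∫⁻ v in Icc (0:ℝ) 1, PhiIter F (n+1) u v * h v := by
            refine lintegral_congr fun v => ?_
            simp_rw [← mul_assoc]
            exact lintegral_mul_const _ ((ENNReal.measurable_ofReal.comp
              (hF.comp (measurable_const.prodMk measurable_id))).mul
              ((measurable_PhiIter hF n).comp (measurable_id.prodMk measurable_const)))

lemma lintegral_OpE_le (hF : Measurable (Function.uncurry F)) (hop : kernelOpNorm F ≤ 1)
    {h : ℝ → ℝ≥0∞} (hh : Measurable h) :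
    ∫⁻ u in Icc (0:ℝ) 1, OpE F h u ≤ ∫⁻ v in Icc (0:ℝ) 1, h v := by
  calc ∫⁻ u in Icc (0:ℝ) 1, OpE F h u
      = ∫⁻ v in Icc (0:ℝ) 1, ∫⁻ u in Icc (0:ℝ) 1, ENNReal.ofReal (F u v) * h v := by
        refine lintegral_lintegral_swap (Measurable.aemeasurable ?_)
        exact (ENNReal.measurable_ofReal.comp hF).mul (hh.comp measurable_snd)
    _ = ∫⁻ v in Icc (0:ℝ) 1, (∫⁻ u in Icc (0:ℝ) 1, ENNReal.ofReal (F u v)) * h v := by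
        refine lintegral_congr fun v => ?_
        exact lintegral_mul_const _ (ENNReal.measurable_ofReal.comp
          (hF.comp (measurable_id.prodMk measurable_const)))
    _ ≤ ∫⁻ v in Icc (0:ℝ) 1, h v := by
        refine lintegral_mono_ae ?_
        filter_upwards [ae_restrict_mem measurableSet_Icc] with v hv
        calc (∫⁻ u in Icc (0:ℝ) 1, ENNReal.ofReal (F u v)) * h v
            ≤ 1 * h v := mul_le_mul_left (col_le_one hop hv) _
          _ = h v := one_mul _

lemma lintegral_OpE_iter_le (hF : Measurable (Function.uncurry F)) (hop : kernelOpNorm F ≤ 1)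
    {h : ℝ → ℝ≥0∞} (hh : Measurable h) (n : ℕ) :
    ∫⁻ u in Icc (0:ℝ) 1, (OpE F)^[n] h u ≤ ∫⁻ v in Icc (0:ℝ) 1, h v := by
  induction n with
  | zero => exact le_rfl
  | succ n ih =>
      calc ∫⁻ u in Icc (0:ℝ) 1, (OpE F)^[n+1] h u
          = ∫⁻ u in Icc (0:ℝ) 1, OpE F ((OpE F)^[n] h) u := by
            simp [Function.iterate_succ_apply']
        _ ≤ ∫⁻ u in Icc (0:ℝ) 1, (OpE F)^[n] h u :=
            lintegral_OpE_le hF hop (measurable_OpE_iter hF hh n)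
        _ ≤ _ := ih

lemma lintegral_OpE_iter_k {γ : ℝ} {k : ℕ} (hF : Measurable (Function.uncurry F))
    (hnn : ∀ u ∈ Icc (0:ℝ) 1, ∀ v ∈ Icc (0:ℝ) 1, 0 ≤ F u v)
    (hop : kernelOpNorm F ≤ 1) (hk : 1 ≤ k)
    (hiter : kernelOpNorm (kernelIter F (k - 1)) ≤ ENNReal.ofReal γ)
    {h : ℝ → ℝ≥0∞} (hh : Measurable h) :
    ∫⁻ u in Icc (0:ℝ) 1, (OpE F)^[k] h u
      ≤ ENNReal.ofReal γ * ∫⁻ v in Icc (0:ℝ) 1, h v := by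
  obtain ⟨m, rfl⟩ : ∃ m, k = m + 1 := ⟨k - 1, (Nat.succ_pred_eq_of_pos hk).symm⟩
  have hm : m + 1 - 1 = m := rfl
  rw [hm] at hiter
  calc ∫⁻ u in Icc (0:ℝ) 1, (OpE F)^[m+1] h u
      = ∫⁻ u in Icc (0:ℝ) 1, ∫⁻ v in Icc (0:ℝ) 1, PhiIter F m u v * h v :=
        lintegral_congr fun u => OpE_iter_succ hF hh m u
    _ = ∫⁻ v in Icc (0:ℝ) 1, ∫⁻ u in Icc (0:ℝ) 1, PhiIter F m u v * h v := by
        refine lintegral_lintegral_swap (Measurable.aemeasurable ?_)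
        exact (measurable_PhiIter hF m).mul (hh.comp measurable_snd)
    _ = ∫⁻ v in Icc (0:ℝ) 1, (∫⁻ u in Icc (0:ℝ) 1, PhiIter F m u v) * h v := by
        refine lintegral_congr fun v => ?_
        exact lintegral_mul_const _ ((measurable_PhiIter hF m).comp
          (measurable_id.prodMk measurable_const))
    _ ≤ ∫⁻ v in Icc (0:ℝ) 1, ENNReal.ofReal γ * h v := by
        refine lintegral_mono_ae ?_
        filter_upwards [ae_restrict_mem measurableSet_Icc] with v hv
        have := PhiIter_col_le_gamma (k := m+1) hF hnn hop hiter hv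
        rw [hm] at this
        exact mul_le_mul_left this _
    _ = ENNReal.ofReal γ * ∫⁻ v in Icc (0:ℝ) 1, h v :=
        lintegral_const_mul _ hh

lemma OpE_mono {a b : ℝ → ℝ≥0∞} (hab : ∀ v ∈ Icc (0:ℝ) 1, a v ≤ b v) (u : ℝ) :
    OpE F a u ≤ OpE F b u := by
  refine lintegral_mono_ae ?_
  filter_upwards [ae_restrict_mem measurableSet_Icc] with v hv
  exact mul_le_mul_right (hab v hv) _

lemma OpE_add (hF : Measurable (Function.uncurry F)) {b c : ℝ → ℝ≥0∞}
    (hb : Measurable b) (u : ℝ) :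
    OpE F (fun v => b v + c v) u = OpE F b u + OpE F c u := by
  simp_rw [OpE, mul_add]
  exact lintegral_add_left ((ENNReal.measurable_ofReal.comp
    (hF.comp (measurable_const.prodMk measurable_id))).mul hb) _

lemma OpE_iter_le_add (hF : Measurable (Function.uncurry F)) (n : ℕ)
    {a b c : ℝ → ℝ≥0∞} (hb : Measurable b) (hc : Measurable c)
    (hab : ∀ v ∈ Icc (0:ℝ) 1, a v ≤ b v + c v) :
    ∀ u ∈ Icc (0:ℝ) 1, (OpE F)^[n] a u ≤ (OpE F)^[n] b u + (OpE F)^[n] c u := by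
  induction n generalizing a b c with
  | zero => exact hab
  | succ n ih =>
      intro u hu
      simp only [Function.iterate_succ_apply]
      refine ih (OpE_measurable hF hb) (OpE_measurable hF hc) (fun v _ => ?_) u hu
      calc OpE F a v ≤ OpE F (fun w => b w + c w) v :=
            OpE_mono hab v
        _ = OpE F b v + OpE F c v := OpE_add hF hb v

lemma key_iteration (hF : Measurable (Function.uncurry F)) {g S : ℝ → ℝ≥0∞}
    (hg : Measurable g) (hS : Measurable S)
    (key : ∀ u ∈ Icc (0:ℝ) 1, g u ≤ S u + OpE F g u) (n : ℕ) :
    ∀ u ∈ Icc (0:ℝ) 1, g u ≤ (∑ i ∈ Finset.range n, (OpE F)^[i] S u) + (OpE F)^[n] g u := by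
  induction n with
  | zero => intro u hu; simp
  | succ n ih =>
      intro u hu
      have h1 : (OpE F)^[n] g u ≤ (OpE F)^[n] S u + (OpE F)^[n+1] g u := by
        have := OpE_iter_le_add hF n hS (OpE_measurable hF hg) key u hu
        rwa [Function.iterate_succ_apply]
      calc g u ≤ (∑ i ∈ Finset.range n, (OpE F)^[i] S u) + (OpE F)^[n] g u := ih u hu
        _ ≤ (∑ i ∈ Finset.range n, (OpE F)^[i] S u)
              + ((OpE F)^[n] S u + (OpE F)^[n+1] g u) := add_le_add_right h1 _
        _ = (∑ i ∈ Finset.range (n+1), (OpE F)^[i] S u) + (OpE F)^[n+1] g u := by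
            rw [Finset.sum_range_succ, add_assoc]

end
end RegAux

namespace RegAux
noncomputable section

lemma ofReal_ciSup_le {ι : Sort*} [Nonempty ι] {f : ι → ℝ}
    {C : ℝ≥0∞} (h : ∀ i, ENNReal.ofReal (f i) ≤ C) : ENNReal.ofReal (⨆ i, f i) ≤ C := by
  by_cases hb : BddAbove (Set.range f)
  · rcases eq_or_ne C ⊤ with rfl | hC
    · exact le_top
    · have h' : ∀ i, f i ≤ C.toReal := fun i =>
        (ENNReal.ofReal_le_iff_le_toReal hC).mp (h i)
      calc ENNReal.ofReal (⨆ i, f i) ≤ ENNReal.ofReal C.toReal :=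
            ENNReal.ofReal_le_ofReal (ciSup_le h')
        _ = C := ENNReal.ofReal_toReal hC
  · rw [Real.iSup_of_not_bddAbove hb]
    simp

/-- countable dense subset of `[0,T]` used to compute path suprema -/
def ratD (T : ℝ) : Set ℝ := {T} ∪ (Set.range ((↑) : ℚ → ℝ) ∩ Ico 0 T)

lemma ratD_subset {T : ℝ} (hT : 0 < T) : ratD T ⊆ Icc 0 T := by
  rintro t (rfl | ⟨-, h0, hlt⟩)
  · exact ⟨hT.le, le_rfl⟩
  · exact ⟨h0, hlt.le⟩

lemma ratD_countable (T : ℝ) : (ratD T).Countable :=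
  (Set.countable_singleton T).union
    (Set.Countable.mono Set.inter_subset_left (Set.countable_range _))

lemma measurable_ratSup {T : ℝ} (hT : 0 < T) {X : ℝ → ℝ → ℝ} (hX : MemDT T X) :
    Measurable fun u => ⨆ t ∈ ratD T, ENNReal.ofReal |X u t| := by
  haveI := (ratD_countable T).to_subtype
  have : (fun u => ⨆ t ∈ ratD T, ENNReal.ofReal |X u t|)
      = fun u => ⨆ t : ratD T, ENNReal.ofReal |X u t.1| := by
    funext u; rw [iSup_subtype']
  rw [this]
  exact Measurable.iSup fun t =>
    (ENNReal.measurable_ofReal.comp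
      ((hX.meas t.1 (ratD_subset hT t.2)).abs))

lemma pathSup_eq_ratSup {T : ℝ} (hT : 0 < T) {X : ℝ → ℝ → ℝ} (hX : MemDT T X)
    {u : ℝ} (hu : u ∈ Icc (0:ℝ) 1) :
    pathSup T X u = ⨆ t ∈ ratD T, ENNReal.ofReal |X u t| := by
  simp only [pathSup]
  refine le_antisymm ?_ ?_
  · refine iSup₂_le fun t ht => ?_
    rcases eq_or_lt_of_le ht.2 with rfl | hlt
    · exact le_biSup (fun t => ENNReal.ofReal |X u t|) (Set.mem_union_left _ rfl)
    · -- t < T : approximate from the right by rationals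
      have ht' : t ∈ Ico (0:ℝ) T := ⟨ht.1, hlt⟩
      have hex : ∀ n : ℕ, ∃ q : ℚ, t < (q:ℝ) ∧ (q:ℝ) < min T (t + 1/(n+1)) := by
        intro n
        exact exists_rat_btwn (lt_min hlt (lt_add_of_pos_right t (by positivity)))
      choose q hq1 hq2 using hex
      have htend : Tendsto (fun n : ℕ => ((q n : ℝ))) atTop (nhds t) := by
        refine tendsto_of_tendsto_of_tendsto_of_le_of_le
          (tendsto_const_nhds) ?_ (fun n => (hq1 n).le)
          (fun n => le_trans (hq2 n).le (min_le_right _ _))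
        simpa using tendsto_const_nhds.add (tendsto_one_div_add_atTop_nhds_zero_nat (𝕜 := ℝ))
      have hXtend : Tendsto (fun n : ℕ => X u (q n)) atTop (nhds (X u t)) :=
        (hX.rightCont u hu t ht').tendsto.comp
          (tendsto_nhdsWithin_iff.mpr ⟨htend, Eventually.of_forall fun n => (hq1 n).le⟩)
      have hoftend : Tendsto (fun n : ℕ => ENNReal.ofReal |X u (q n)|) atTop
          (nhds (ENNReal.ofReal |X u t|)) :=
        (ENNReal.continuous_ofReal.tendsto _).comp ((continuous_abs.tendsto _).comp hXtend)
      refine le_of_tendsto hoftend (Eventually.of_forall fun n => ?_)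
      refine le_biSup (fun t => ENNReal.ofReal |X u t|) (Set.mem_union_right _ ⟨⟨q n, rfl⟩, ?_, ?_⟩)
      · exact le_trans ht.1 (hq1 n).le
      · exact lt_of_lt_of_le (hq2 n) (min_le_left _ _)
  · exact iSup₂_le fun t ht => le_biSup (fun t => ENNReal.ofReal |X u t|) (ratD_subset hT ht)

lemma final_arith {A N : ℝ≥0∞} {γ : ℝ} {k : ℕ} (hk : 1 ≤ k) (hγ : γ ∈ Set.Ioo (0:ℝ) 1)
    (hA : A ≠ ⊤) (h : A ≤ (k : ℝ≥0∞) * N + ENNReal.ofReal γ * A) :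
    A ≤ ENNReal.ofReal ((k : ℝ) / (1 - γ)) * N := by
  have h1γ : (0:ℝ) < 1 - γ := by linarith [hγ.2]
  have hkpos : (0:ℝ) < (k:ℝ) := by exact_mod_cast hk
  rcases eq_or_ne N ⊤ with rfl | hN
  · rw [ENNReal.mul_top (by
      simp only [ne_eq, ENNReal.ofReal_eq_zero, not_le]
      positivity)]
    exact le_top
  · have hfin : (k : ℝ≥0∞) * N + ENNReal.ofReal γ * A ≠ ⊤ :=
      ENNReal.add_ne_top.mpr ⟨ENNReal.mul_ne_top (ENNReal.natCast_ne_top k) hN,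
        ENNReal.mul_ne_top ENNReal.ofReal_ne_top hA⟩
    have h' : A.toReal ≤ (k:ℝ) * N.toReal + γ * A.toReal := by
      have h2 := ENNReal.toReal_mono hfin h
      rwa [ENNReal.toReal_add (ENNReal.mul_ne_top (ENNReal.natCast_ne_top k) hN)
          (ENNReal.mul_ne_top ENNReal.ofReal_ne_top hA),
        ENNReal.toReal_mul, ENNReal.toReal_mul, ENNReal.toReal_natCast,
        ENNReal.toReal_ofReal hγ.1.le] at h2
    have h3 : A.toReal ≤ ((k:ℝ) / (1-γ)) * N.toReal := by
      rw [div_mul_eq_mul_div, le_div_iff₀ h1γ]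
      nlinarith
    calc A = ENNReal.ofReal A.toReal := (ENNReal.ofReal_toReal hA).symm
      _ ≤ ENNReal.ofReal (((k:ℝ) / (1-γ)) * N.toReal) := ENNReal.ofReal_le_ofReal h3
      _ = ENNReal.ofReal ((k:ℝ) / (1-γ)) * ENNReal.ofReal N.toReal :=
          ENNReal.ofReal_mul (by positivity)
      _ = ENNReal.ofReal ((k:ℝ) / (1-γ)) * N := by rw [ENNReal.ofReal_toReal hN]

end
end RegAux



/-- norm bound on the regulator: `‖Ψ_F(X)‖_{T,1} ≤ k ‖X‖_{T,1} / (1 − γ)`. -/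
theorem regulator_norm_bound
    (T : ℝ) (hT : 0 < T) (F : ℝ → ℝ → ℝ) (γ : ℝ) (k : ℕ) (hF : IsReflKernel F γ k)
    (X Y : ℝ → ℝ → ℝ) (hX : MemDT T X) (hY : IsRegulator T X F Y) :
    TNorm T Y ≤ ENNReal.ofReal ((k : ℝ) / (1 - γ)) * TNorm T X := by
  obtain ⟨hYD, hYfix⟩ := hY
  have hTmem : T ∈ Icc (0:ℝ) T := ⟨hT.le, le_rfl⟩
  have hg : Measurable (fun u => ENNReal.ofReal (Y u T)) :=
    ENNReal.measurable_ofReal.comp (hYD.memDT.meas T hTmem)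
  have hS : Measurable (fun u => ⨆ t ∈ RegAux.ratD T, ENNReal.ofReal |X u t|) :=
    RegAux.measurable_ratSup hT hX
  have hYnn : ∀ u ∈ Icc (0:ℝ) 1, ∀ t ∈ Icc (0:ℝ) T, 0 ≤ Y u t := by
    intro u hu t ht
    rw [hYfix u hu t ht]
    exact Real.iSup_nonneg (fun s => le_max_right _ _)
  have hpsY : ∀ u ∈ Icc (0:ℝ) 1, pathSup T Y u = ENNReal.ofReal (Y u T) := by
    intro u hu
    simp only [pathSup]
    refine le_antisymm (iSup₂_le fun t ht => ?_) ?_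
    · refine ENNReal.ofReal_le_ofReal ?_
      rw [abs_of_nonneg (hYnn u hu t ht)]
      exact hYD.mono u hu ht hTmem ht.2
    · calc ENNReal.ofReal (Y u T) = ENNReal.ofReal |Y u T| := by
            rw [abs_of_nonneg (hYnn u hu T hTmem)]
        _ ≤ _ := le_biSup (fun t => ENNReal.ofReal |Y u t|) hTmem
  have hkey : ∀ u ∈ Icc (0:ℝ) 1, ENNReal.ofReal (Y u T)
      ≤ (⨆ t ∈ RegAux.ratD T, ENNReal.ofReal |X u t|)
        + RegAux.OpE F (fun v => ENNReal.ofReal (Y v T)) u := by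
    intro u hu
    rw [← RegAux.pathSup_eq_ratSup hT hX hu]
    rw [hYfix u hu T hTmem]
    haveI : Nonempty (Icc (0:ℝ) T) := ⟨⟨0, le_rfl, hT.le⟩⟩
    refine RegAux.ofReal_ciSup_le fun s => ?_
    have habs : max (-(X u s.1) + kernelApply F Y u s.1) 0
        ≤ |X u s.1| + |kernelApply F Y u s.1| :=
      max_le (add_le_add (neg_le_abs _) (le_abs_self _)) (by positivity)
    calc ENNReal.ofReal (max (-(X u s.1) + kernelApply F Y u s.1) 0)
        ≤ ENNReal.ofReal (|X u s.1| + |kernelApply F Y u s.1|) :=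
          ENNReal.ofReal_le_ofReal habs
      _ = ENNReal.ofReal |X u s.1| + ENNReal.ofReal |kernelApply F Y u s.1| :=
          ENNReal.ofReal_add (abs_nonneg _) (abs_nonneg _)
      _ ≤ pathSup T X u + RegAux.OpE F (fun v => ENNReal.ofReal (Y v T)) u := by
          refine add_le_add ?_ ?_
          · exact le_biSup (fun t => ENNReal.ofReal |X u t|) s.2
          · rw [← Real.enorm_eq_ofReal_abs]
            calc ‖kernelApply F Y u s.1‖ₑ
                ≤ ∫⁻ v in Icc (0:ℝ) 1, ‖F u v * Y v s.1‖ₑ :=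
                  enorm_integral_le_lintegral_enorm _
              _ ≤ RegAux.OpE F (fun v => ENNReal.ofReal (Y v T)) u := by
                  refine lintegral_mono_ae ?_
                  filter_upwards [ae_restrict_mem measurableSet_Icc] with v hv
                  have hFnn : 0 ≤ F u v := hF.nonneg u hu v hv
                  have hYv : 0 ≤ Y v s.1 := hYnn v hv s.1 s.2
                  rw [Real.enorm_eq_ofReal_abs, abs_of_nonneg (mul_nonneg hFnn hYv),
                    ENNReal.ofReal_mul hFnn]
                  exact mul_le_mul_right (ENNReal.ofReal_le_ofReal
                    (hYD.mono v hv s.2 hTmem s.2.2)) _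
  have hTY : TNorm T Y = ∫⁻ u in Icc (0:ℝ) 1, ENNReal.ofReal (Y u T) :=
    setLIntegral_congr_fun measurableSet_Icc (fun u hu => hpsY u hu)
  have hTX : TNorm T X = ∫⁻ u in Icc (0:ℝ) 1, ⨆ t ∈ RegAux.ratD T, ENNReal.ofReal |X u t| :=
    setLIntegral_congr_fun measurableSet_Icc
      (fun u hu => RegAux.pathSup_eq_ratSup hT hX hu)
  have hiter := RegAux.key_iteration hF.meas hg hS hkey k
  have hmeasS : ∀ i : ℕ,
      Measurable ((RegAux.OpE F)^[i] (fun u => ⨆ t ∈ RegAux.ratD T, ENNReal.ofReal |X u t|)) :=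
    fun i => RegAux.measurable_OpE_iter hF.meas hS i
  have main : TNorm T Y ≤ (k : ℝ≥0∞) * TNorm T X + ENNReal.ofReal γ * TNorm T Y := by
    rw [hTY, hTX]
    calc ∫⁻ u in Icc (0:ℝ) 1, ENNReal.ofReal (Y u T)
        ≤ ∫⁻ u in Icc (0:ℝ) 1,
            ((∑ i ∈ Finset.range k,
              (RegAux.OpE F)^[i] (fun u => ⨆ t ∈ RegAux.ratD T, ENNReal.ofReal |X u t|) u)
              + (RegAux.OpE F)^[k] (fun u => ENNReal.ofReal (Y u T)) u) := by
          refine lintegral_mono_ae ?_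
          filter_upwards [ae_restrict_mem measurableSet_Icc] with u hu
          exact hiter u hu
      _ = (∑ i ∈ Finset.range k, ∫⁻ u in Icc (0:ℝ) 1,
              (RegAux.OpE F)^[i] (fun u => ⨆ t ∈ RegAux.ratD T, ENNReal.ofReal |X u t|) u)
            + ∫⁻ u in Icc (0:ℝ) 1, (RegAux.OpE F)^[k] (fun u => ENNReal.ofReal (Y u T)) u := by
          rw [lintegral_add_left (Finset.measurable_sum _ (fun i _ => hmeasS i))]
          rw [lintegral_finset_sum _ (fun i _ => hmeasS i)]
      _ ≤ (∑ _i ∈ Finset.range k, ∫⁻ u in Icc (0:ℝ) 1,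
              ⨆ t ∈ RegAux.ratD T, ENNReal.ofReal |X u t|)
            + ENNReal.ofReal γ * ∫⁻ u in Icc (0:ℝ) 1, ENNReal.ofReal (Y u T) := by
          refine add_le_add (Finset.sum_le_sum fun i _ => ?_) ?_
          · exact RegAux.lintegral_OpE_iter_le hF.meas hF.opNorm_le_one hS i
          · exact RegAux.lintegral_OpE_iter_k hF.meas hF.nonneg hF.opNorm_le_one
              hF.k_pos hF.iter_le hg
      _ = (k : ℝ≥0∞) * (∫⁻ u in Icc (0:ℝ) 1, ⨆ t ∈ RegAux.ratD T, ENNReal.ofReal |X u t|)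
            + ENNReal.ofReal γ * ∫⁻ u in Icc (0:ℝ) 1, ENNReal.ofReal (Y u T) := by
          rw [Finset.sum_const, Finset.card_range, nsmul_eq_mul]
  have hfin : TNorm T Y ≠ ⊤ := hYD.memDT.finite
  exact RegAux.final_arith hF.k_pos hF.gamma_mem hfin main
end

section
/- Let T > 0, let F₁ be a reflection kernel with bounded parameters (γ₁, k₁) and F₂ a reflection kernel with bounded parameters (γ₂, k₂), and let X ∈ D_T(L1). Then ‖Ψ_{F₁}(X) − Ψ_{F₂}(X)‖_{T,1} ≤ k₁ k₂ ‖F₁ − F₂‖_op ‖X‖_{T,1} / ((1 − γ₁)(1 − γ₂)), where F₁ − F₂ denotes the kernel (u,v) ↦ F₁(u,v) − F₂(u,v). -/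
open MeasureTheory Set Filter
open scoped ENNReal NNReal

lemma ofReal_iSup_le {ι : Sort*} [Nonempty ι] (g : ι → ℝ) :
    ENNReal.ofReal (⨆ i, g i) ≤ ⨆ i, ENNReal.ofReal (g i) := by
  set a := ⨆ i, ENNReal.ofReal (g i) with ha
  rcases eq_or_ne a ⊤ with h | h
  · simp [h]
  · have hb : ∀ i, g i ≤ a.toReal := by
      intro i
      rcases le_or_gt (g i) 0 with h0 | h0
      · exact h0.trans ENNReal.toReal_nonneg
      · have h1 : ENNReal.ofReal (g i) ≤ a := le_iSup (fun i => ENNReal.ofReal (g i)) i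
        have h2 := ENNReal.toReal_mono h h1
        rwa [ENNReal.toReal_ofReal h0.le] at h2
    calc ENNReal.ofReal (⨆ i, g i) ≤ ENNReal.ofReal a.toReal :=
          ENNReal.ofReal_le_ofReal (ciSup_le hb)
      _ = a := ENNReal.ofReal_toReal h

lemma iSup_ofReal_abs_sub_eq_top {ι : Sort*} (g1 g2 : ι → ℝ)
    (h1 : ¬ BddAbove (Set.range g1)) (h2 : BddAbove (Set.range g2)) :
    (⨆ i, ENNReal.ofReal |g1 i - g2 i|) = ⊤ := by
  obtain ⟨B, hB⟩ := h2
  rw [iSup_eq_top]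
  intro b hb
  obtain ⟨x, hx, hgx⟩ := not_bddAbove_iff.1 h1 (b.toReal + B)
  obtain ⟨i, rfl⟩ := hx
  refine ⟨i, ?_⟩
  have hg2 : g2 i ≤ B := hB (Set.mem_range_self i)
  have hlt : b.toReal < |g1 i - g2 i| := by
    have := le_abs_self (g1 i - g2 i); linarith
  exact (ENNReal.lt_ofReal_iff_toReal_lt hb.ne).2 hlt

lemma ofReal_abs_iSup_sub_iSup_le {ι : Sort*} [Nonempty ι] (g1 g2 : ι → ℝ)
    (h1 : ∀ i, 0 ≤ g1 i) (h2 : ∀ i, 0 ≤ g2 i) :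
    ENNReal.ofReal |(⨆ i, g1 i) - ⨆ i, g2 i| ≤ ⨆ i, ENNReal.ofReal |g1 i - g2 i| := by
  by_cases hb1 : BddAbove (Set.range g1)
  · by_cases hb2 : BddAbove (Set.range g2)
    · have hbd : BddAbove (Set.range fun i => |g1 i - g2 i|) := by
        obtain ⟨B1, hB1⟩ := hb1; obtain ⟨B2, hB2⟩ := hb2
        refine ⟨B1 + B2, ?_⟩
        rintro x ⟨i, rfl⟩
        have hg1 := hB1 (Set.mem_range_self i)
        have hg2 := hB2 (Set.mem_range_self i)
        have := h1 i; have := h2 i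
        rw [abs_sub_le_iff]; constructor <;> linarith
      have key : |(⨆ i, g1 i) - ⨆ i, g2 i| ≤ ⨆ i, |g1 i - g2 i| := by
        rw [abs_sub_le_iff]
        constructor
        · have h : (⨆ i, g1 i) ≤ (⨆ i, g2 i) + ⨆ i, |g1 i - g2 i| := by
            refine ciSup_le fun i => ?_
            have ha := le_ciSup hb2 i
            have hc := le_ciSup hbd i
            have := le_abs_self (g1 i - g2 i)
            linarith
          linarith
        · have h : (⨆ i, g2 i) ≤ (⨆ i, g1 i) + ⨆ i, |g1 i - g2 i| := by
            refine ciSup_le fun i => ?_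
            have ha := le_ciSup hb1 i
            have hc := le_ciSup hbd i
            have := neg_abs_le (g1 i - g2 i)
            linarith
          linarith
      calc ENNReal.ofReal |(⨆ i, g1 i) - ⨆ i, g2 i|
          ≤ ENNReal.ofReal (⨆ i, |g1 i - g2 i|) := ENNReal.ofReal_le_ofReal key
        _ ≤ ⨆ i, ENNReal.ofReal |g1 i - g2 i| := ofReal_iSup_le _
    · have ht := iSup_ofReal_abs_sub_eq_top g2 g1 hb2 hb1
      simp_rw [abs_sub_comm (g2 _) (g1 _)] at ht
      simp [ht]
  · by_cases hb2 : BddAbove (Set.range g2)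
    · have ht := iSup_ofReal_abs_sub_eq_top g1 g2 hb1 hb2
      simp [ht]
    · rw [Real.iSup_of_not_bddAbove hb1, Real.iSup_of_not_bddAbove hb2]
      simp

lemma ofReal_abs_integral_sub_le {α : Type*} [MeasurableSpace α] {μ : Measure α} (a b : α → ℝ)
    (ha : Measurable a) (hb : Measurable b) :
    ENNReal.ofReal |(∫ x, a x ∂μ) - ∫ x, b x ∂μ| ≤ ∫⁻ x, ENNReal.ofReal |a x - b x| ∂μ := by
  by_cases hfin : (∫⁻ x, ENNReal.ofReal |a x - b x| ∂μ) = ⊤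
  · simp [hfin]
  · have hint : Integrable (fun x => a x - b x) μ := by
      refine ⟨(ha.sub hb).aestronglyMeasurable, ?_⟩
      rw [hasFiniteIntegral_iff_norm]
      simp_rw [Real.norm_eq_abs]
      exact lt_top_iff_ne_top.2 hfin
    by_cases hia : Integrable a μ
    · have hib : Integrable b μ := by
        have h := hia.sub hint
        exact h.congr (ae_of_all _ fun x => by simp)
      rw [← integral_sub hia hib]
      calc ENNReal.ofReal |∫ x, (a x - b x) ∂μ|
          ≤ ENNReal.ofReal (∫ x, |a x - b x| ∂μ) := by
            apply ENNReal.ofReal_le_ofReal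
            simpa [Real.norm_eq_abs] using
              norm_integral_le_integral_norm (μ := μ) (fun x => a x - b x)
        _ = ∫⁻ x, ENNReal.ofReal |a x - b x| ∂μ :=
            ofReal_integral_eq_lintegral_ofReal hint.abs (ae_of_all _ fun x => abs_nonneg _)
    · have hib : ¬ Integrable b μ := by
        intro hib
        have h := hib.add hint
        exact hia (h.congr (ae_of_all _ fun x => by simp))
      rw [integral_undef hia, integral_undef hib]
      simp

lemma ofReal_abs_integral_le {α : Type*} [MeasurableSpace α] {μ : Measure α} (a : α → ℝ)
    (ha : Measurable a) :
    ENNReal.ofReal |∫ x, a x ∂μ| ≤ ∫⁻ x, ENNReal.ofReal |a x| ∂μ := by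
  simpa using ofReal_abs_integral_sub_le a (fun _ => 0) ha measurable_const

noncomputable section
def pathSupQ (T : ℝ) (f : ℝ → ℝ → ℝ) (u : ℝ) : ℝ≥0∞ :=
  (⨆ q : {q : ℚ // (q:ℝ) ∈ Ico (0:ℝ) T}, ENNReal.ofReal |f u q|) ⊔ ENNReal.ofReal |f u T|
end

lemma abs_le_pathSup {T : ℝ} {f : ℝ → ℝ → ℝ} {u t : ℝ} (ht : t ∈ Icc (0:ℝ) T) :
    ENNReal.ofReal |f u t| ≤ pathSup T f u :=
  le_iSup₂ (f := fun t (_ : t ∈ Icc (0:ℝ) T) => ENNReal.ofReal |f u t|) t ht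

lemma pathSupQ_measurable {T : ℝ} (hT : 0 < T) {f : ℝ → ℝ → ℝ}
    (hm : ∀ t ∈ Icc (0:ℝ) T, Measurable fun u => f u t) :
    Measurable (pathSupQ T f) := by
  apply Measurable.sup
  · exact Measurable.iSup fun q => ((hm q ⟨q.2.1, q.2.2.le⟩).abs).ennreal_ofReal
  · exact ((hm T ⟨hT.le, le_rfl⟩).abs).ennreal_ofReal

lemma pathSup_eq_pathSupQ {T : ℝ} (hT : 0 < T) {f : ℝ → ℝ → ℝ} {u : ℝ}
    (hrc : ∀ t ∈ Ico (0:ℝ) T, ContinuousWithinAt (f u) (Ici t) t) :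
    pathSup T f u = pathSupQ T f u := by
  apply le_antisymm
  · refine iSup₂_le fun t ht => ?_
    rcases eq_or_lt_of_le ht.2 with heq | hlt
    · subst heq; exact le_sup_right
    · have hq : ∀ n : ℕ, ∃ q : ℚ, t < (q:ℝ) ∧ (q:ℝ) < min T (t + 1/((n:ℝ)+1)) := by
        intro n
        have h1 : t < min T (t + 1/((n:ℝ)+1)) := by
          apply lt_min hlt
          have : (0:ℝ) < 1/((n:ℝ)+1) := by positivity
          linarith
        obtain ⟨q, hq1, hq2⟩ := exists_rat_btwn h1
        exact ⟨q, hq1, hq2⟩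
      choose q hq1 hq2 using hq
      have hmem : ∀ n, ((q n : ℝ)) ∈ Ico (0:ℝ) T := fun n =>
        ⟨ht.1.trans (hq1 n).le, (hq2 n).trans_le (min_le_left _ _)⟩
      have htend : Tendsto (fun n => (q n : ℝ)) atTop (nhds t) := by
        have hub : ∀ n : ℕ, (q n:ℝ) ≤ t + 1/((n:ℝ)+1) := fun n =>
          ((hq2 n).trans_le (min_le_right _ _)).le
        have h0 : Tendsto (fun n : ℕ => t + 1/((n:ℝ)+1)) atTop (nhds t) := by
          have := tendsto_one_div_add_atTop_nhds_zero_nat (𝕜 := ℝ)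
          simpa using tendsto_const_nhds.add this
        exact tendsto_of_tendsto_of_tendsto_of_le_of_le tendsto_const_nhds h0
          (fun n => (hq1 n).le) hub
      have htend' : Tendsto (fun n => (q n : ℝ)) atTop (nhdsWithin t (Ici t)) :=
        tendsto_nhdsWithin_of_tendsto_nhds_of_eventually_within _ htend
          (Eventually.of_forall fun n => (hq1 n).le)
      have hf : Tendsto (fun n => ENNReal.ofReal |f u (q n)|) atTop
          (nhds (ENNReal.ofReal |f u t|)) := by
        have h1 := (hrc t ⟨ht.1, hlt⟩).tendsto.comp htend'
        exact (ENNReal.continuous_ofReal.tendsto _).comp ((continuous_abs.tendsto _).comp h1)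
      refine le_of_tendsto hf (Eventually.of_forall fun n => ?_)
      have h2 : ENNReal.ofReal |f u (q n)|
          ≤ ⨆ p : {p : ℚ // (p:ℝ) ∈ Ico (0:ℝ) T}, ENNReal.ofReal |f u p| :=
        le_iSup (fun p : {p : ℚ // (p:ℝ) ∈ Ico (0:ℝ) T} => ENNReal.ofReal |f u p|)
          ⟨q n, hmem n⟩
      exact h2.trans le_sup_left
  · apply sup_le
    · exact iSup_le fun p => abs_le_pathSup ⟨p.2.1, p.2.2.le⟩
    · exact abs_le_pathSup ⟨hT.le, le_rfl⟩

noncomputable section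
def klin (G : ℝ → ℝ → ℝ) (u v : ℝ) : ℝ≥0∞ := ENNReal.ofReal |G u v|

def opK (G : ℝ → ℝ → ℝ) (φ : ℝ → ℝ≥0∞) (u : ℝ) : ℝ≥0∞ :=
  ∫⁻ v in Icc (0:ℝ) 1, klin G u v * φ v

def kiter (G : ℝ → ℝ → ℝ) : ℕ → ℝ → ℝ → ℝ≥0∞
  | 0 => klin G
  | n + 1 => fun u v => ∫⁻ w in Icc (0:ℝ) 1, klin G u w * kiter G n w v
end

variable {G : ℝ → ℝ → ℝ} {φ ψ : ℝ → ℝ≥0∞}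

lemma klin_meas2 (hG : Measurable (Function.uncurry G)) :
    Measurable fun p : ℝ × ℝ => klin G p.1 p.2 :=
  hG.abs.ennreal_ofReal

lemma klin_left (hG : Measurable (Function.uncurry G)) (u : ℝ) :
    Measurable (klin G u) :=
  ((hG.comp (measurable_prodMk_left)).abs).ennreal_ofReal

lemma klin_right (hG : Measurable (Function.uncurry G)) (v : ℝ) :
    Measurable fun u => klin G u v :=
  ((hG.comp (measurable_prodMk_right)).abs).ennreal_ofReal

lemma kiter_meas2 (hG : Measurable (Function.uncurry G)) (n : ℕ) :
    Measurable fun p : ℝ × ℝ => kiter G n p.1 p.2 := by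
  induction n with
  | zero => exact klin_meas2 hG
  | succ n ih =>
    have h : Measurable fun z : (ℝ × ℝ) × ℝ => klin G z.1.1 z.2 * kiter G n z.2 z.1.2 :=
      ((klin_meas2 hG).comp (measurable_fst.fst.prodMk measurable_snd)).mul
        (ih.comp (measurable_snd.prodMk measurable_fst.snd))
    exact h.lintegral_prod_right'

lemma kiter_right (hG : Measurable (Function.uncurry G)) (n : ℕ) (v : ℝ) :
    Measurable fun u => kiter G n u v :=
  (kiter_meas2 hG n).comp (measurable_prodMk_right)

lemma kiter_left (hG : Measurable (Function.uncurry G)) (n : ℕ) (u : ℝ) :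
    Measurable (kiter G n u) :=
  (kiter_meas2 hG n).comp (measurable_prodMk_left)

lemma opK_meas (hG : Measurable (Function.uncurry G)) (hφ : Measurable φ) :
    Measurable (opK G φ) := by
  have h : Measurable fun z : ℝ × ℝ => klin G z.1 z.2 * φ z.2 :=
    (klin_meas2 hG).mul (hφ.comp measurable_snd)
  exact h.lintegral_prod_right'

lemma opK_mono (h : ∀ v ∈ Icc (0:ℝ) 1, φ v ≤ ψ v) (u : ℝ) : opK G φ u ≤ opK G ψ u := by
  refine lintegral_mono_ae ?_
  filter_upwards [ae_restrict_mem measurableSet_Icc] with v hv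
  exact mul_le_mul_right (h v hv) _

lemma opK_add (hG : Measurable (Function.uncurry G)) (hφ : Measurable φ) (ψ : ℝ → ℝ≥0∞)
    (u : ℝ) : opK G (fun v => φ v + ψ v) u = opK G φ u + opK G ψ u := by
  unfold opK
  simp_rw [mul_add]
  exact lintegral_add_left ((klin_left hG u).mul hφ) _

lemma col_le_opNorm (v : ℝ) (hv : v ∈ Icc (0:ℝ) 1) :
    (∫⁻ u in Icc (0:ℝ) 1, klin G u v) ≤ kernelOpNorm G :=
  le_iSup₂ (f := fun v (_ : v ∈ Icc (0:ℝ) 1) => ∫⁻ u in Icc (0:ℝ) 1, ENNReal.ofReal |G u v|) v hv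

lemma lintegral_opK_le (hG : Measurable (Function.uncurry G)) (hφ : Measurable φ) :
    ∫⁻ u in Icc (0:ℝ) 1, opK G φ u ≤ kernelOpNorm G * ∫⁻ v in Icc (0:ℝ) 1, φ v := by
  unfold opK
  rw [lintegral_lintegral_swap (((klin_meas2 hG).mul (hφ.comp measurable_snd)).aemeasurable)]
  calc ∫⁻ v in Icc (0:ℝ) 1, ∫⁻ u in Icc (0:ℝ) 1, klin G u v * φ v
      = ∫⁻ v in Icc (0:ℝ) 1, (∫⁻ u in Icc (0:ℝ) 1, klin G u v) * φ v := by
        refine lintegral_congr fun v => lintegral_mul_const _ (klin_right hG v)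
    _ ≤ ∫⁻ v in Icc (0:ℝ) 1, kernelOpNorm G * φ v := by
        refine lintegral_mono_ae ?_
        filter_upwards [ae_restrict_mem measurableSet_Icc] with v hv
        exact mul_le_mul_left (col_le_opNorm v hv) _
    _ = kernelOpNorm G * ∫⁻ v in Icc (0:ℝ) 1, φ v := lintegral_const_mul _ hφ

lemma kiter_col_le_one (hG : Measurable (Function.uncurry G)) (hop : kernelOpNorm G ≤ 1)
    (n : ℕ) : ∀ v ∈ Icc (0:ℝ) 1, (∫⁻ u in Icc (0:ℝ) 1, kiter G n u v) ≤ 1 := by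
  induction n with
  | zero => exact fun v hv => (col_le_opNorm v hv).trans hop
  | succ n ih =>
    intro v hv
    have hmeas : Measurable fun z : ℝ × ℝ => klin G z.1 z.2 * kiter G n z.2 v :=
      (klin_meas2 hG).mul ((kiter_right hG n v).comp measurable_snd)
    calc ∫⁻ u in Icc (0:ℝ) 1, kiter G (n+1) u v
        = ∫⁻ u in Icc (0:ℝ) 1, ∫⁻ w in Icc (0:ℝ) 1, klin G u w * kiter G n w v := rfl
      _ = ∫⁻ w in Icc (0:ℝ) 1, ∫⁻ u in Icc (0:ℝ) 1, klin G u w * kiter G n w v :=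
          lintegral_lintegral_swap hmeas.aemeasurable
      _ = ∫⁻ w in Icc (0:ℝ) 1, (∫⁻ u in Icc (0:ℝ) 1, klin G u w) * kiter G n w v := by
          refine lintegral_congr fun w => lintegral_mul_const _ (klin_right hG w)
      _ ≤ ∫⁻ w in Icc (0:ℝ) 1, 1 * kiter G n w v := by
          refine lintegral_mono_ae ?_
          filter_upwards [ae_restrict_mem measurableSet_Icc] with w hw
          exact mul_le_mul_left ((col_le_opNorm w hw).trans hop) _
      _ = ∫⁻ w in Icc (0:ℝ) 1, kiter G n w v := by simp
      _ ≤ 1 := ih v hv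

lemma opK_iterate_eq (hG : Measurable (Function.uncurry G)) (hφ : Measurable φ) (n : ℕ)
    (u : ℝ) : (opK G)^[n+1] φ u = ∫⁻ v in Icc (0:ℝ) 1, kiter G n u v * φ v := by
  induction n generalizing u with
  | zero => rfl
  | succ n ih =>
    rw [Function.iterate_succ_apply']
    have h1 : opK G ((opK G)^[n+1] φ) u
        = ∫⁻ w in Icc (0:ℝ) 1, klin G u w * ∫⁻ v in Icc (0:ℝ) 1, kiter G n w v * φ v := by
      exact lintegral_congr fun w => by rw [ih w]
    rw [h1]
    have h2 : ∀ w, klin G u w * (∫⁻ v in Icc (0:ℝ) 1, kiter G n w v * φ v)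
        = ∫⁻ v in Icc (0:ℝ) 1, klin G u w * (kiter G n w v * φ v) :=
      fun w => (lintegral_const_mul' _ _ ENNReal.ofReal_ne_top).symm
    simp_rw [h2]
    have hmeas : Measurable fun z : ℝ × ℝ => klin G u z.1 * (kiter G n z.1 z.2 * φ z.2) :=
      ((klin_left hG u).comp measurable_fst).mul
        ((kiter_meas2 hG n).mul (hφ.comp measurable_snd))
    rw [lintegral_lintegral_swap hmeas.aemeasurable]
    refine lintegral_congr fun v => ?_
    simp_rw [← mul_assoc]
    exact lintegral_mul_const _ ((klin_left hG u).mul (kiter_right hG n v))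

lemma kernelIter_meas2 (hG : Measurable (Function.uncurry G)) (n : ℕ) :
    Measurable fun p : ℝ × ℝ => kernelIter G n p.1 p.2 := by
  induction n with
  | zero => exact hG
  | succ n ih =>
    have h : StronglyMeasurable fun z : (ℝ × ℝ) × ℝ => G z.1.1 z.2 * kernelIter G n z.2 z.1.2 :=
      ((hG.comp (measurable_fst.fst.prodMk measurable_snd)).mul
        (ih.comp (measurable_snd.prodMk measurable_fst.snd))).stronglyMeasurable
    exact h.integral_prod_right'.measurable

lemma kernelIter_nonneg (hnn : ∀ u ∈ Icc (0:ℝ) 1, ∀ v ∈ Icc (0:ℝ) 1, 0 ≤ G u v) (n : ℕ) :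
    ∀ u ∈ Icc (0:ℝ) 1, ∀ v ∈ Icc (0:ℝ) 1, 0 ≤ kernelIter G n u v := by
  induction n with
  | zero => exact hnn
  | succ n ih =>
    intro u hu v hv
    exact setIntegral_nonneg measurableSet_Icc fun w hw =>
      mul_nonneg (hnn u hu w hw) (ih w hw v hv)

lemma kiter_ae_eq (hG : Measurable (Function.uncurry G))
    (hnn : ∀ u ∈ Icc (0:ℝ) 1, ∀ v ∈ Icc (0:ℝ) 1, 0 ≤ G u v)
    (hop : kernelOpNorm G ≤ 1) (n : ℕ) :
    ∀ v ∈ Icc (0:ℝ) 1, (fun u => kiter G n u v)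
      =ᵐ[volume.restrict (Icc (0:ℝ) 1)] fun u => ENNReal.ofReal (kernelIter G n u v) := by
  induction n with
  | zero =>
    intro v hv
    filter_upwards [ae_restrict_mem measurableSet_Icc] with u hu
    show klin G u v = _
    rw [klin, abs_of_nonneg (hnn u hu v hv)]
    rfl
  | succ n ih =>
    intro v hv
    have hfin : (∫⁻ u in Icc (0:ℝ) 1, kiter G (n+1) u v) ≠ ⊤ :=
      ((kiter_col_le_one hG hop (n+1) v hv).trans_lt ENNReal.one_lt_top).ne
    have hmeas : Measurable fun u => kiter G (n+1) u v := kiter_right hG (n+1) v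
    filter_upwards [ae_restrict_mem measurableSet_Icc, ae_lt_top hmeas hfin] with u hu hufin
    have e1 : kiter G (n+1) u v
        = ∫⁻ w in Icc (0:ℝ) 1, ENNReal.ofReal (G u w * kernelIter G n w v) := by
      show (∫⁻ w in Icc (0:ℝ) 1, klin G u w * kiter G n w v) = _
      refine lintegral_congr_ae ?_
      filter_upwards [ae_restrict_mem measurableSet_Icc, ih v hv] with w hw hwe
      rw [hwe, klin, abs_of_nonneg (hnn u hu w hw), ← ENNReal.ofReal_mul (hnn u hu w hw)]
    have hgmeas : Measurable fun w => G u w * kernelIter G n w v :=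
      (hG.comp measurable_prodMk_left).mul
        ((kernelIter_meas2 hG n).comp measurable_prodMk_right)
    have hgnn : ∀ᵐ w ∂(volume.restrict (Icc (0:ℝ) 1)), 0 ≤ G u w * kernelIter G n w v := by
      filter_upwards [ae_restrict_mem measurableSet_Icc] with w hw
      exact mul_nonneg (hnn u hu w hw) (kernelIter_nonneg hnn n w hw v hv)
    have hint : Integrable (fun w => G u w * kernelIter G n w v)
        (volume.restrict (Icc (0:ℝ) 1)) := by
      refine ⟨hgmeas.aestronglyMeasurable, ?_⟩
      rw [hasFiniteIntegral_iff_norm]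
      have e2 : (∫⁻ w in Icc (0:ℝ) 1, ENNReal.ofReal ‖G u w * kernelIter G n w v‖)
          = ∫⁻ w in Icc (0:ℝ) 1, ENNReal.ofReal (G u w * kernelIter G n w v) := by
        refine lintegral_congr_ae ?_
        filter_upwards [hgnn] with w hw
        rw [Real.norm_eq_abs, abs_of_nonneg hw]
      rw [e2, ← e1]
      exact hufin
    have e3 : ENNReal.ofReal (kernelIter G (n+1) u v)
        = ∫⁻ w in Icc (0:ℝ) 1, ENNReal.ofReal (G u w * kernelIter G n w v) :=
      ofReal_integral_eq_lintegral_ofReal hint hgnn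
    rw [e1, e3]

lemma kiter_col_le_gamma (hG : Measurable (Function.uncurry G))
    (hnn : ∀ u ∈ Icc (0:ℝ) 1, ∀ v ∈ Icc (0:ℝ) 1, 0 ≤ G u v)
    (hop : kernelOpNorm G ≤ 1) {γ : ℝ} {k : ℕ}
    (hit : kernelOpNorm (kernelIter G (k-1)) ≤ ENNReal.ofReal γ) :
    ∀ v ∈ Icc (0:ℝ) 1,
      (∫⁻ u in Icc (0:ℝ) 1, kiter G (k-1) u v) ≤ ENNReal.ofReal γ := by
  intro v hv
  rw [lintegral_congr_ae (kiter_ae_eq hG hnn hop (k-1) v hv)]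
  have e : (∫⁻ u in Icc (0:ℝ) 1, ENNReal.ofReal (kernelIter G (k-1) u v))
      = ∫⁻ u in Icc (0:ℝ) 1, ENNReal.ofReal |kernelIter G (k-1) u v| := by
    refine lintegral_congr_ae ?_
    filter_upwards [ae_restrict_mem measurableSet_Icc] with u hu
    rw [abs_of_nonneg (kernelIter_nonneg hnn (k-1) u hu v hv)]
  rw [e]
  exact (le_iSup₂ (f := fun v (_ : v ∈ Icc (0:ℝ) 1) =>
    ∫⁻ u in Icc (0:ℝ) 1, ENNReal.ofReal |kernelIter G (k-1) u v|) v hv).trans hit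

lemma opK_iter_meas (hG : Measurable (Function.uncurry G)) (hφ : Measurable φ) (n : ℕ) :
    Measurable ((opK G)^[n] φ) := by
  induction n with
  | zero => exact hφ
  | succ n ih => rw [Function.iterate_succ_apply']; exact opK_meas hG ih

lemma opK_iter_mono (h : ∀ v ∈ Icc (0:ℝ) 1, φ v ≤ ψ v) (n : ℕ) :
    ∀ u ∈ Icc (0:ℝ) 1, (opK G)^[n] φ u ≤ (opK G)^[n] ψ u := by
  induction n with
  | zero => exact h
  | succ n ih =>
    intro u _
    rw [Function.iterate_succ_apply', Function.iterate_succ_apply']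
    exact opK_mono (fun v hv => ih v hv) u

lemma opK_iter_add (hG : Measurable (Function.uncurry G)) (n : ℕ) :
    ∀ (φ ψ : ℝ → ℝ≥0∞), Measurable φ → Measurable ψ → ∀ u,
      (opK G)^[n] (fun v => φ v + ψ v) u = (opK G)^[n] φ u + (opK G)^[n] ψ u := by
  induction n with
  | zero => intro φ ψ _ _ u; rfl
  | succ n ih =>
    intro φ ψ hφ hψ u
    rw [Function.iterate_succ_apply, Function.iterate_succ_apply, Function.iterate_succ_apply]
    have he : (opK G (fun v => φ v + ψ v)) = fun v => opK G φ v + opK G ψ v :=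
      funext fun v => opK_add hG hφ ψ v
    rw [he]
    exact ih _ _ (opK_meas hG hφ) (opK_meas hG hψ) u

lemma master_ineq (hG : Measurable (Function.uncurry G)) {φ ψ : ℝ → ℝ≥0∞}
    (hφ : Measurable φ) (hψ : Measurable ψ)
    (hrec : ∀ u ∈ Icc (0:ℝ) 1, φ u ≤ ψ u + opK G φ u) (m : ℕ) :
    ∀ u ∈ Icc (0:ℝ) 1,
      φ u ≤ (∑ j ∈ Finset.range m, (opK G)^[j] ψ u) + (opK G)^[m] φ u := by
  induction m with
  | zero => intro u _; simp
  | succ m ih =>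
    intro u hu
    have h1 := ih u hu
    have h2 : (opK G)^[m] φ u ≤ (opK G)^[m] (fun v => ψ v + opK G φ v) u :=
      opK_iter_mono hrec m u hu
    rw [opK_iter_add hG m ψ (opK G φ) hψ (opK_meas hG hφ) u] at h2
    have h3 : (opK G)^[m] (opK G φ) u = (opK G)^[m+1] φ u := by
      rw [Function.iterate_succ_apply]
    rw [h3] at h2
    calc φ u ≤ _ := h1
      _ ≤ (∑ j ∈ Finset.range m, (opK G)^[j] ψ u)
          + ((opK G)^[m] ψ u + (opK G)^[m+1] φ u) := add_le_add_right h2 _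
      _ = (∑ j ∈ Finset.range (m+1), (opK G)^[j] ψ u) + (opK G)^[m+1] φ u := by
          rw [Finset.sum_range_succ]; ring

lemma lintegral_opK_iter_le (hG : Measurable (Function.uncurry G))
    (hop : kernelOpNorm G ≤ 1) (hψ : Measurable ψ) (j : ℕ) :
    (∫⁻ u in Icc (0:ℝ) 1, (opK G)^[j] ψ u) ≤ ∫⁻ u in Icc (0:ℝ) 1, ψ u := by
  induction j with
  | zero => exact le_rfl
  | succ j ih =>
    calc (∫⁻ u in Icc (0:ℝ) 1, (opK G)^[j+1] ψ u)
        = ∫⁻ u in Icc (0:ℝ) 1, opK G ((opK G)^[j] ψ) u := by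
          simp_rw [Function.iterate_succ_apply']
      _ ≤ kernelOpNorm G * ∫⁻ u in Icc (0:ℝ) 1, (opK G)^[j] ψ u :=
          lintegral_opK_le hG (opK_iter_meas hG hψ j)
      _ ≤ 1 * ∫⁻ u in Icc (0:ℝ) 1, (opK G)^[j] ψ u := mul_le_mul_left hop _
      _ ≤ ∫⁻ u in Icc (0:ℝ) 1, ψ u := by rw [one_mul]; exact ih

lemma lintegral_opK_iter_k (hG : Measurable (Function.uncurry G))
    (hnn : ∀ u ∈ Icc (0:ℝ) 1, ∀ v ∈ Icc (0:ℝ) 1, 0 ≤ G u v)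
    (hop : kernelOpNorm G ≤ 1) {γ : ℝ} {k : ℕ} (hk : 1 ≤ k)
    (hit : kernelOpNorm (kernelIter G (k-1)) ≤ ENNReal.ofReal γ)
    (hφ : Measurable φ) :
    (∫⁻ u in Icc (0:ℝ) 1, (opK G)^[k] φ u)
      ≤ ENNReal.ofReal γ * ∫⁻ u in Icc (0:ℝ) 1, φ u := by
  obtain ⟨k', rfl⟩ : ∃ k', k = k' + 1 := ⟨k - 1, (Nat.succ_pred_eq_of_pos hk).symm⟩
  have hk' : k' + 1 - 1 = k' := rfl
  rw [hk'] at hit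
  have e : ∀ u, (opK G)^[k'+1] φ u = ∫⁻ v in Icc (0:ℝ) 1, kiter G k' u v * φ v :=
    opK_iterate_eq hG hφ k'
  have hmeas : Measurable fun z : ℝ × ℝ => kiter G k' z.1 z.2 * φ z.2 :=
    (kiter_meas2 hG k').mul (hφ.comp measurable_snd)
  calc (∫⁻ u in Icc (0:ℝ) 1, (opK G)^[k'+1] φ u)
      = ∫⁻ u in Icc (0:ℝ) 1, ∫⁻ v in Icc (0:ℝ) 1, kiter G k' u v * φ v :=
        lintegral_congr e
    _ = ∫⁻ v in Icc (0:ℝ) 1, ∫⁻ u in Icc (0:ℝ) 1, kiter G k' u v * φ v :=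
        lintegral_lintegral_swap hmeas.aemeasurable
    _ = ∫⁻ v in Icc (0:ℝ) 1, (∫⁻ u in Icc (0:ℝ) 1, kiter G k' u v) * φ v :=
        lintegral_congr fun v => lintegral_mul_const _ (kiter_right hG k' v)
    _ ≤ ∫⁻ v in Icc (0:ℝ) 1, ENNReal.ofReal γ * φ v := by
        refine lintegral_mono_ae ?_
        filter_upwards [ae_restrict_mem measurableSet_Icc] with v hv
        have := kiter_col_le_gamma hG hnn hop (k := k'+1) hit v hv
        rw [hk'] at this
        exact mul_le_mul_left this _
    _ = ENNReal.ofReal γ * ∫⁻ v in Icc (0:ℝ) 1, φ v := lintegral_const_mul _ hφ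

lemma key_bound (hG : Measurable (Function.uncurry G))
    (hnn : ∀ u ∈ Icc (0:ℝ) 1, ∀ v ∈ Icc (0:ℝ) 1, 0 ≤ G u v)
    (hop : kernelOpNorm G ≤ 1) {γ : ℝ} {k : ℕ} (hk : 1 ≤ k)
    (hit : kernelOpNorm (kernelIter G (k-1)) ≤ ENNReal.ofReal γ)
    {φ ψ : ℝ → ℝ≥0∞} (hφ : Measurable φ) (hψ : Measurable ψ)
    (hrec : ∀ u ∈ Icc (0:ℝ) 1, φ u ≤ ψ u + opK G φ u) :
    (∫⁻ u in Icc (0:ℝ) 1, φ u)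
      ≤ (k : ℝ≥0∞) * (∫⁻ u in Icc (0:ℝ) 1, ψ u)
        + ENNReal.ofReal γ * ∫⁻ u in Icc (0:ℝ) 1, φ u := by
  have hmaster := master_ineq hG hφ hψ hrec k
  calc (∫⁻ u in Icc (0:ℝ) 1, φ u)
      ≤ ∫⁻ u in Icc (0:ℝ) 1,
          ((∑ j ∈ Finset.range k, (opK G)^[j] ψ u) + (opK G)^[k] φ u) := by
        refine lintegral_mono_ae ?_
        filter_upwards [ae_restrict_mem measurableSet_Icc] with u hu
        exact hmaster u hu
    _ = (∫⁻ u in Icc (0:ℝ) 1, ∑ j ∈ Finset.range k, (opK G)^[j] ψ u)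
        + ∫⁻ u in Icc (0:ℝ) 1, (opK G)^[k] φ u :=
        lintegral_add_left (Finset.measurable_sum _ fun j _ => opK_iter_meas hG hψ j) _
    _ = (∑ j ∈ Finset.range k, ∫⁻ u in Icc (0:ℝ) 1, (opK G)^[j] ψ u)
        + ∫⁻ u in Icc (0:ℝ) 1, (opK G)^[k] φ u := by
        rw [lintegral_finset_sum _ fun j _ => opK_iter_meas hG hψ j]
    _ ≤ (∑ _j ∈ Finset.range k, ∫⁻ u in Icc (0:ℝ) 1, ψ u)
        + ENNReal.ofReal γ * ∫⁻ u in Icc (0:ℝ) 1, φ u :=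
        add_le_add (Finset.sum_le_sum fun j _ => lintegral_opK_iter_le hG hop hψ j)
          (lintegral_opK_iter_k hG hnn hop hk hit hφ)
    _ = (k : ℝ≥0∞) * (∫⁻ u in Icc (0:ℝ) 1, ψ u)
        + ENNReal.ofReal γ * ∫⁻ u in Icc (0:ℝ) 1, φ u := by
        rw [Finset.sum_const, Finset.card_range, nsmul_eq_mul]

lemma ennreal_solve {a b c : ℝ≥0∞} (ha : a ≠ ⊤) (hc : c < 1) (h : a ≤ b + c * a) :
    a ≤ (1 - c)⁻¹ * b := by
  have h2 : a - c * a ≤ b := tsub_le_iff_right.2 h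
  have h3 : (1 - c) * a = a - c * a := by
    rw [ENNReal.sub_mul (fun _ _ => ha), one_mul]
  have hne : (1 - c) ≠ 0 := by
    simp only [ne_eq, tsub_eq_zero_iff_le, not_le]
    exact hc
  have hnt : (1 - c) ≠ ⊤ := (tsub_le_self.trans_lt ENNReal.one_lt_top).ne
  calc a = (1 - c)⁻¹ * ((1 - c) * a) := by
        rw [← mul_assoc, ENNReal.inv_mul_cancel hne hnt, one_mul]
    _ ≤ (1 - c)⁻¹ * b := mul_le_mul_right (by rw [h3]; exact h2) _

lemma regulator_pointwise {T : ℝ} (hT : 0 < T) {X F Y : ℝ → ℝ → ℝ} {γ : ℝ} {k : ℕ}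
    (hF : IsReflKernel F γ k) (hX : MemDT T X) (hY : IsRegulator T X F Y) :
    ∀ u ∈ Icc (0:ℝ) 1,
      pathSupQ T Y u ≤ pathSupQ T X u + opK F (pathSupQ T Y) u := by
  intro u hu
  rw [← pathSup_eq_pathSupQ hT (hY.1.memDT.rightCont u hu)]
  refine iSup₂_le fun t ht => ?_
  haveI : Nonempty (Icc (0:ℝ) t) := (Set.nonempty_Icc.2 ht.1).to_subtype
  rw [hY.2 u hu t ht]
  have habs : |piMap X F Y u t|
      = ⨆ s : Icc (0:ℝ) t, max (-(X u s.1) + kernelApply F Y u s.1) 0 :=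
    abs_of_nonneg (Real.iSup_nonneg fun s => le_max_right _ _)
  rw [habs]
  refine (ofReal_iSup_le _).trans (iSup_le fun s => ?_)
  obtain ⟨s, hs⟩ := s
  have hsT : s ∈ Icc (0:ℝ) T := ⟨hs.1, hs.2.trans ht.2⟩
  have hm : max (-(X u s) + kernelApply F Y u s) 0
      ≤ |X u s| + max (kernelApply F Y u s) 0 := by
    apply max_le
    · have h1 := neg_le_abs (X u s)
      have h2 := le_max_left (kernelApply F Y u s) (0:ℝ)
      linarith
    · exact add_nonneg (abs_nonneg _) (le_max_right _ _)
  have hXpart : ENNReal.ofReal |X u s| ≤ pathSupQ T X u := by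
    rw [← pathSup_eq_pathSupQ hT (hX.rightCont u hu)]
    exact abs_le_pathSup hsT
  have hmeasInt : Measurable fun v => F u v * Y v s :=
    (hF.meas.comp measurable_prodMk_left).mul (hY.1.memDT.meas s hsT)
  have hYpart : ENNReal.ofReal (max (kernelApply F Y u s) 0) ≤ opK F (pathSupQ T Y) u := by
    calc ENNReal.ofReal (max (kernelApply F Y u s) 0)
        ≤ ENNReal.ofReal |kernelApply F Y u s| :=
          ENNReal.ofReal_le_ofReal (max_le (le_abs_self _) (abs_nonneg _))
      _ ≤ ∫⁻ v in Icc (0:ℝ) 1, ENNReal.ofReal |F u v * Y v s| :=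
          ofReal_abs_integral_le _ hmeasInt
      _ ≤ opK F (pathSupQ T Y) u := by
          refine lintegral_mono_ae ?_
          filter_upwards [ae_restrict_mem measurableSet_Icc] with v hv
          rw [abs_mul, ENNReal.ofReal_mul (abs_nonneg _)]
          refine mul_le_mul_right ?_ _
          rw [← pathSup_eq_pathSupQ hT (hY.1.memDT.rightCont v hv)]
          exact abs_le_pathSup hsT
  calc ENNReal.ofReal (max (-(X u s) + kernelApply F Y u s) 0)
      ≤ ENNReal.ofReal (|X u s| + max (kernelApply F Y u s) 0) := ENNReal.ofReal_le_ofReal hm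
    _ ≤ ENNReal.ofReal |X u s| + ENNReal.ofReal (max (kernelApply F Y u s) 0) :=
        ENNReal.ofReal_add_le
    _ ≤ pathSupQ T X u + opK F (pathSupQ T Y) u := add_le_add hXpart hYpart

lemma diff_pointwise {T : ℝ} (hT : 0 < T) {X F1 F2 Y1 Y2 : ℝ → ℝ → ℝ} {γ1 γ2 : ℝ} {k1 k2 : ℕ}
    (hF1 : IsReflKernel F1 γ1 k1) (hF2 : IsReflKernel F2 γ2 k2)
    (hY1 : IsRegulator T X F1 Y1) (hY2 : IsRegulator T X F2 Y2) :
    ∀ u ∈ Icc (0:ℝ) 1,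
      pathSupQ T (fun a b => Y1 a b - Y2 a b) u
        ≤ opK (fun a b => F1 a b - F2 a b) (pathSupQ T Y2) u
          + opK F1 (pathSupQ T (fun a b => Y1 a b - Y2 a b)) u := by
  intro u hu
  rw [← pathSup_eq_pathSupQ hT
    (fun t ht => ((hY1.1.memDT.rightCont u hu t ht).sub (hY2.1.memDT.rightCont u hu t ht)))]
  refine iSup₂_le fun t ht => ?_
  haveI : Nonempty (Icc (0:ℝ) t) := (Set.nonempty_Icc.2 ht.1).to_subtype
  show ENNReal.ofReal |Y1 u t - Y2 u t| ≤ _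
  rw [hY1.2 u hu t ht, hY2.2 u hu t ht]
  show ENNReal.ofReal |(⨆ s : Icc (0:ℝ) t, max (-(X u s.1) + kernelApply F1 Y1 u s.1) 0)
    - ⨆ s : Icc (0:ℝ) t, max (-(X u s.1) + kernelApply F2 Y2 u s.1) 0| ≤ _
  refine (ofReal_abs_iSup_sub_iSup_le _ _
    (fun s => le_max_right _ _) (fun s => le_max_right _ _)).trans (iSup_le fun s => ?_)
  obtain ⟨s, hs⟩ := s
  have hsT : s ∈ Icc (0:ℝ) T := ⟨hs.1, hs.2.trans ht.2⟩
  have h1 : |max (-(X u s) + kernelApply F1 Y1 u s) 0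
        - max (-(X u s) + kernelApply F2 Y2 u s) 0|
      ≤ |kernelApply F1 Y1 u s - kernelApply F2 Y2 u s| := by
    have h := abs_max_sub_max_le_abs (-(X u s) + kernelApply F1 Y1 u s)
      (-(X u s) + kernelApply F2 Y2 u s) 0
    have he : (-(X u s) + kernelApply F1 Y1 u s) - (-(X u s) + kernelApply F2 Y2 u s)
        = kernelApply F1 Y1 u s - kernelApply F2 Y2 u s := by ring
    rwa [he] at h
  have hmeas1 : Measurable fun v => F1 u v * Y1 v s :=
    (hF1.meas.comp measurable_prodMk_left).mul (hY1.1.memDT.meas s hsT)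
  have hmeasm : Measurable fun v => F1 u v * Y2 v s :=
    (hF1.meas.comp measurable_prodMk_left).mul (hY2.1.memDT.meas s hsT)
  have hmeas2 : Measurable fun v => F2 u v * Y2 v s :=
    (hF2.meas.comp measurable_prodMk_left).mul (hY2.1.memDT.meas s hsT)
  have hpart1 : ENNReal.ofReal |kernelApply F1 Y1 u s - kernelApply F1 Y2 u s|
      ≤ opK F1 (pathSupQ T (fun a b => Y1 a b - Y2 a b)) u := by
    refine (ofReal_abs_integral_sub_le _ _ hmeas1 hmeasm).trans ?_
    refine lintegral_mono_ae ?_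
    filter_upwards [ae_restrict_mem measurableSet_Icc] with v hv
    rw [← mul_sub, abs_mul, ENNReal.ofReal_mul (abs_nonneg _)]
    refine mul_le_mul_right ?_ _
    rw [← pathSup_eq_pathSupQ hT
      (fun r hr => ((hY1.1.memDT.rightCont v hv r hr).sub (hY2.1.memDT.rightCont v hv r hr)))]
    exact abs_le_pathSup hsT
  have hpart2 : ENNReal.ofReal |kernelApply F1 Y2 u s - kernelApply F2 Y2 u s|
      ≤ opK (fun a b => F1 a b - F2 a b) (pathSupQ T Y2) u := by
    refine (ofReal_abs_integral_sub_le _ _ hmeasm hmeas2).trans ?_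
    refine lintegral_mono_ae ?_
    filter_upwards [ae_restrict_mem measurableSet_Icc] with v hv
    rw [← sub_mul, abs_mul, ENNReal.ofReal_mul (abs_nonneg _)]
    refine mul_le_mul_right ?_ _
    rw [← pathSup_eq_pathSupQ hT (hY2.1.memDT.rightCont v hv)]
    exact abs_le_pathSup hsT
  calc ENNReal.ofReal |max (-(X u s) + kernelApply F1 Y1 u s) 0
        - max (-(X u s) + kernelApply F2 Y2 u s) 0|
      ≤ ENNReal.ofReal |kernelApply F1 Y1 u s - kernelApply F2 Y2 u s| :=
        ENNReal.ofReal_le_ofReal h1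
    _ ≤ ENNReal.ofReal (|kernelApply F1 Y1 u s - kernelApply F1 Y2 u s|
        + |kernelApply F1 Y2 u s - kernelApply F2 Y2 u s|) :=
        ENNReal.ofReal_le_ofReal (abs_sub_le _ _ _)
    _ ≤ ENNReal.ofReal |kernelApply F1 Y1 u s - kernelApply F1 Y2 u s|
        + ENNReal.ofReal |kernelApply F1 Y2 u s - kernelApply F2 Y2 u s| :=
        ENNReal.ofReal_add_le
    _ ≤ opK F1 (pathSupQ T (fun a b => Y1 a b - Y2 a b)) u
        + opK (fun a b => F1 a b - F2 a b) (pathSupQ T Y2) u := add_le_add hpart1 hpart2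
    _ = _ := add_comm _ _

/-- Lipschitz bound for the regulator in the reflection kernel:
`‖Ψ_{F₁}(X) − Ψ_{F₂}(X)‖_{T,1} ≤ k₁k₂ ‖F₁ − F₂‖_op ‖X‖_{T,1} / ((1−γ₁)(1−γ₂))`. -/
theorem regulator_kernel_lipschitz
    (T : ℝ) (hT : 0 < T) (F1 F2 : ℝ → ℝ → ℝ) (γ1 γ2 : ℝ) (k1 k2 : ℕ)
    (hF1 : IsReflKernel F1 γ1 k1) (hF2 : IsReflKernel F2 γ2 k2)
    (X Y1 Y2 : ℝ → ℝ → ℝ) (hX : MemDT T X)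
    (hY1 : IsRegulator T X F1 Y1) (hY2 : IsRegulator T X F2 Y2) :
    TNorm T (fun u t => Y1 u t - Y2 u t)
      ≤ ENNReal.ofReal ((k1 : ℝ) * k2 / ((1 - γ1) * (1 - γ2)))
          * kernelOpNorm (fun u v => F1 u v - F2 u v) * TNorm T X := by
  have hSm1 : Measurable (pathSupQ T Y1) := pathSupQ_measurable hT hY1.1.memDT.meas
  have hSm2 : Measurable (pathSupQ T Y2) := pathSupQ_measurable hT hY2.1.memDT.meas
  have hAm : Measurable (pathSupQ T X) := pathSupQ_measurable hT hX.meas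
  have hDm : Measurable (pathSupQ T (fun a b => Y1 a b - Y2 a b)) :=
    pathSupQ_measurable hT (fun t ht => (hY1.1.memDT.meas t ht).sub (hY2.1.memDT.meas t ht))
  have hDmeas : Measurable (Function.uncurry fun a b => F1 a b - F2 a b) :=
    hF1.meas.sub hF2.meas
  have hTX : TNorm T X = ∫⁻ u in Icc (0:ℝ) 1, pathSupQ T X u := by
    refine lintegral_congr_ae ?_
    filter_upwards [ae_restrict_mem measurableSet_Icc] with u hu
    exact pathSup_eq_pathSupQ hT (hX.rightCont u hu)
  have hTY1 : TNorm T Y1 = ∫⁻ u in Icc (0:ℝ) 1, pathSupQ T Y1 u := by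
    refine lintegral_congr_ae ?_
    filter_upwards [ae_restrict_mem measurableSet_Icc] with u hu
    exact pathSup_eq_pathSupQ hT (hY1.1.memDT.rightCont u hu)
  have hTY2 : TNorm T Y2 = ∫⁻ u in Icc (0:ℝ) 1, pathSupQ T Y2 u := by
    refine lintegral_congr_ae ?_
    filter_upwards [ae_restrict_mem measurableSet_Icc] with u hu
    exact pathSup_eq_pathSupQ hT (hY2.1.memDT.rightCont u hu)
  have hTD : TNorm T (fun a b => Y1 a b - Y2 a b)
      = ∫⁻ u in Icc (0:ℝ) 1, pathSupQ T (fun a b => Y1 a b - Y2 a b) u := by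
    refine lintegral_congr_ae ?_
    filter_upwards [ae_restrict_mem measurableSet_Icc] with u hu
    exact pathSup_eq_pathSupQ hT
      (fun t ht => (hY1.1.memDT.rightCont u hu t ht).sub (hY2.1.memDT.rightCont u hu t ht))
  have hg1lt : ENNReal.ofReal γ1 < 1 := ENNReal.ofReal_lt_one.2 hF1.gamma_mem.2
  have hg2lt : ENNReal.ofReal γ2 < 1 := ENNReal.ofReal_lt_one.2 hF2.gamma_mem.2
  have hrec2 := regulator_pointwise hT hF2 hX hY2
  have hk2 := key_bound hF2.meas hF2.nonneg hF2.opNorm_le_one hF2.k_pos hF2.iter_le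
    hSm2 hAm hrec2
  have hs2fin : (∫⁻ u in Icc (0:ℝ) 1, pathSupQ T Y2 u) ≠ ⊤ := by
    rw [← hTY2]; exact hY2.1.memDT.finite
  have hs2 := ennreal_solve hs2fin hg2lt hk2
  have hrecD := diff_pointwise hT hF1 hF2 hY1 hY2
  have hpsim : Measurable (opK (fun a b => F1 a b - F2 a b) (pathSupQ T Y2)) :=
    opK_meas hDmeas hSm2
  have hk1 := key_bound hF1.meas hF1.nonneg hF1.opNorm_le_one hF1.k_pos hF1.iter_le
    hDm hpsim hrecD
  have hdfin : (∫⁻ u in Icc (0:ℝ) 1, pathSupQ T (fun a b => Y1 a b - Y2 a b) u) ≠ ⊤ := by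
    have hb : ∀ u, pathSupQ T (fun a b => Y1 a b - Y2 a b) u
        ≤ pathSupQ T Y1 u + pathSupQ T Y2 u := by
      intro u
      have h1 : ∀ r : ℝ, ENNReal.ofReal |Y1 u r - Y2 u r|
          ≤ ENNReal.ofReal |Y1 u r| + ENNReal.ofReal |Y2 u r| := fun r => by
        have h := abs_sub_le (Y1 u r) 0 (Y2 u r)
        simp only [sub_zero, zero_sub, abs_neg] at h
        exact (ENNReal.ofReal_le_ofReal h).trans ENNReal.ofReal_add_le
      apply sup_le
      · refine iSup_le fun q => (h1 q).trans (add_le_add ?_ ?_)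
        · exact (le_iSup (fun p : {p : ℚ // (p:ℝ) ∈ Ico (0:ℝ) T} =>
            ENNReal.ofReal |Y1 u p|) q).trans le_sup_left
        · exact (le_iSup (fun p : {p : ℚ // (p:ℝ) ∈ Ico (0:ℝ) T} =>
            ENNReal.ofReal |Y2 u p|) q).trans le_sup_left
      · exact (h1 T).trans (add_le_add le_sup_right le_sup_right)
    have hfin : ((∫⁻ u in Icc (0:ℝ) 1, pathSupQ T Y1 u)
        + ∫⁻ u in Icc (0:ℝ) 1, pathSupQ T Y2 u) ≠ ⊤ :=
      ENNReal.add_ne_top.2 ⟨by rw [← hTY1]; exact hY1.1.memDT.finite,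
        by rw [← hTY2]; exact hY2.1.memDT.finite⟩
    exact ne_top_of_le_ne_top hfin ((lintegral_mono hb).trans
      (le_of_eq (lintegral_add_left hSm1 _)))
  have hd := ennreal_solve hdfin hg1lt hk1
  have hmid : (∫⁻ u in Icc (0:ℝ) 1, opK (fun a b => F1 a b - F2 a b) (pathSupQ T Y2) u)
      ≤ kernelOpNorm (fun a b => F1 a b - F2 a b)
        * ∫⁻ v in Icc (0:ℝ) 1, pathSupQ T Y2 v :=
    lintegral_opK_le hDmeas hSm2
  have hp1 : (0:ℝ) < 1 - γ1 := by linarith [hF1.gamma_mem.2]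
  have hp2 : (0:ℝ) < 1 - γ2 := by linarith [hF2.gamma_mem.2]
  have hconst : (1 - ENNReal.ofReal γ1)⁻¹ * ((k1 : ℝ≥0∞) *
        (kernelOpNorm (fun a b => F1 a b - F2 a b)
          * ((1 - ENNReal.ofReal γ2)⁻¹ * ((k2 : ℝ≥0∞) * TNorm T X))))
      = ENNReal.ofReal ((k1 : ℝ) * k2 / ((1 - γ1) * (1 - γ2)))
          * kernelOpNorm (fun u v => F1 u v - F2 u v) * TNorm T X := by
    have e1 : (1 : ℝ≥0∞) - ENNReal.ofReal γ1 = ENNReal.ofReal (1 - γ1) := by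
      rw [ENNReal.ofReal_sub _ hF1.gamma_mem.1.le, ENNReal.ofReal_one]
    have e2 : (1 : ℝ≥0∞) - ENNReal.ofReal γ2 = ENNReal.ofReal (1 - γ2) := by
      rw [ENNReal.ofReal_sub _ hF2.gamma_mem.1.le, ENNReal.ofReal_one]
    have e3 : ENNReal.ofReal ((k1 : ℝ) * k2 / ((1 - γ1) * (1 - γ2)))
        = ((k1 : ℝ≥0∞) * (k2:ℝ≥0∞))
          * ((ENNReal.ofReal (1-γ1))⁻¹ * (ENNReal.ofReal (1-γ2))⁻¹) := by
      rw [ENNReal.ofReal_div_of_pos (mul_pos hp1 hp2),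
        ENNReal.ofReal_mul (Nat.cast_nonneg k1),
        ENNReal.ofReal_natCast, ENNReal.ofReal_natCast,
        ENNReal.ofReal_mul hp1.le, div_eq_mul_inv,
        ENNReal.mul_inv (Or.inl (ENNReal.ofReal_pos.2 hp1).ne')
          (Or.inl ENNReal.ofReal_ne_top)]
    rw [e1, e2, e3]
    ring
  calc TNorm T (fun u t => Y1 u t - Y2 u t)
      = ∫⁻ u in Icc (0:ℝ) 1, pathSupQ T (fun a b => Y1 a b - Y2 a b) u := hTD
    _ ≤ (1 - ENNReal.ofReal γ1)⁻¹ * ((k1 : ℝ≥0∞) *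
          ∫⁻ u in Icc (0:ℝ) 1, opK (fun a b => F1 a b - F2 a b) (pathSupQ T Y2) u) := hd
    _ ≤ (1 - ENNReal.ofReal γ1)⁻¹ * ((k1 : ℝ≥0∞) *
          (kernelOpNorm (fun a b => F1 a b - F2 a b)
            * ∫⁻ v in Icc (0:ℝ) 1, pathSupQ T Y2 v)) :=
        mul_le_mul_right (mul_le_mul_right hmid _) _
    _ ≤ (1 - ENNReal.ofReal γ1)⁻¹ * ((k1 : ℝ≥0∞) *
          (kernelOpNorm (fun a b => F1 a b - F2 a b)
            * ((1 - ENNReal.ofReal γ2)⁻¹ * ((k2 : ℝ≥0∞) * TNorm T X)))) := by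
        refine mul_le_mul_right (mul_le_mul_right (mul_le_mul_right ?_ _) _) _
        rw [hTX]
        exact hs2
    _ = _ := hconst
end

section
/- Let T > 0 and let {x^n}_{n∈ℕ} be a sequence in D_T^↑(L1) that is pointwise nondecreasing in n (x^n_u(t) ≤ x^{n+1}_u(t) for all n, u, t) and majorized by some y ∈ D_T^↑(L1) (x^n ≤ y for all n). Then the sequence has a supremum in D_T^↑(L1): there exists x ∈ D_T^↑(L1) such that x^n ≤ x for all n, and x ≤ z for every z ∈ D_T^↑(L1) satisfying x^n ≤ z for all n. -/
open MeasureTheory Set Filter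
open scoped ENNReal NNReal

private lemma real_le_of_forall_pos_le_add {a b : ℝ} (h : ∀ ε : ℝ, 0 < ε → a ≤ b + ε) :
    a ≤ b := by
  by_contra hc
  push_neg at hc
  have := h ((a - b) / 2) (by linarith)
  linarith

/-- a pointwise nondecreasing sequence in `D_T^↑(L1)` majorized by an
element of `D_T^↑(L1)` has a supremum in `D_T^↑(L1)`. -/
theorem monotone_majorized_sequence_has_sup
    (T : ℝ) (hT : 0 < T) (x : ℕ → ℝ → ℝ → ℝ) (y : ℝ → ℝ → ℝ)
    (hx : ∀ n, MemDTup T (x n)) (hy : MemDTup T y)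
    (hmono : ∀ n : ℕ, ∀ u ∈ Icc (0:ℝ) 1, ∀ t ∈ Icc (0:ℝ) T, x n u t ≤ x (n + 1) u t)
    (hmaj : ∀ n : ℕ, ∀ u ∈ Icc (0:ℝ) 1, ∀ t ∈ Icc (0:ℝ) T, x n u t ≤ y u t) :
    ∃ z : ℝ → ℝ → ℝ, MemDTup T z ∧
      (∀ n : ℕ, ∀ u ∈ Icc (0:ℝ) 1, ∀ t ∈ Icc (0:ℝ) T, x n u t ≤ z u t) ∧
      (∀ w : ℝ → ℝ → ℝ, MemDTup T w →
        (∀ n : ℕ, ∀ u ∈ Icc (0:ℝ) 1, ∀ t ∈ Icc (0:ℝ) T, x n u t ≤ w u t) →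
        ∀ u ∈ Icc (0:ℝ) 1, ∀ t ∈ Icc (0:ℝ) T, z u t ≤ w u t) := by
  classical
  set c : ℝ → ℝ := fun t => max (min t T) 0 with hc
  have hcmem : ∀ t, c t ∈ Icc (0:ℝ) T := fun t =>
    ⟨le_max_right _ _, max_le (min_le_right _ _) hT.le⟩
  have hceq : ∀ t ∈ Icc (0:ℝ) T, c t = t := fun t ht => by
    simp only [hc, min_eq_left ht.2, max_eq_left ht.1]
  have hcmono : Monotone c := fun a b hab => max_le_max (min_le_min_right _ hab) le_rfl
  set G : ℝ → ℝ → ℝ≥0∞ := fun u s => ⨆ n, ENNReal.ofReal (x n u s) with hGdef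
  set Z : ℝ → ℝ → ℝ≥0∞ :=
    fun u t => ⨅ (q : ℚ) (_ : c t < (q:ℝ)), G u (min (q:ℝ) T) with hZdef
  -- basic positivity facts
  have hx0 : ∀ n : ℕ, ∀ u ∈ Icc (0:ℝ) 1, ∀ t ∈ Icc (0:ℝ) T, 0 ≤ x n u t := by
    intro n u hu t ht
    exact le_trans ((hx n).nonneg_zero u hu)
      (((hx n).mono u hu) ⟨le_rfl, hT.le⟩ ht ht.1)
  have hGy : ∀ u ∈ Icc (0:ℝ) 1, ∀ t ∈ Icc (0:ℝ) T, G u t ≤ ENNReal.ofReal (y u t) := by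
    intro u hu t ht
    exact iSup_le fun n => ENNReal.ofReal_le_ofReal (hmaj n u hu t ht)
  have hminmem : ∀ t, ∀ q : ℚ, c t < (q:ℝ) → min (q:ℝ) T ∈ Icc (0:ℝ) T := by
    intro t q hq
    exact ⟨le_min (le_of_lt (lt_of_le_of_lt (hcmem t).1 hq)) hT.le, min_le_right _ _⟩
  have hZle : ∀ u t, ∀ q : ℚ, c t < (q:ℝ) → Z u t ≤ G u (min (q:ℝ) T) := by
    intro u t q hq
    exact iInf₂_le q hq
  have hZG : ∀ u t, Z u t ≤ G u T := by
    intro u t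
    obtain ⟨q, hq⟩ := exists_rat_gt T
    have h := hZle u t q (lt_of_le_of_lt (hcmem t).2 hq)
    rwa [min_eq_right hq.le] at h
  have hGfin : ∀ u ∈ Icc (0:ℝ) 1, ∀ t ∈ Icc (0:ℝ) T, G u t ≠ ⊤ := by
    intro u hu t ht
    exact ne_top_of_le_ne_top ENNReal.ofReal_ne_top (hGy u hu t ht)
  have hZfin : ∀ u ∈ Icc (0:ℝ) 1, ∀ t, Z u t ≠ ⊤ := fun u hu t =>
    ne_top_of_le_ne_top (hGfin u hu T ⟨hT.le, le_rfl⟩) (hZG u t)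
  have hZmono : ∀ u, Monotone (Z u) := by
    intro u a b hab
    exact le_iInf₂ fun q hq => hZle u a q (lt_of_le_of_lt (hcmono hab) hq)
  have hzmono : ∀ u ∈ Icc (0:ℝ) 1, Monotone (fun t => (Z u t).toReal) := by
    intro u hu a b hab
    exact ENNReal.toReal_mono (hZfin u hu b) (hZmono u hab)
  -- the supremum dominates each `x n`
  have hxz : ∀ n : ℕ, ∀ u ∈ Icc (0:ℝ) 1, ∀ t ∈ Icc (0:ℝ) T, x n u t ≤ (Z u t).toReal := by
    intro n u hu t ht
    have h1 : ENNReal.ofReal (x n u t) ≤ Z u t := by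
      refine le_iInf₂ fun q hq => ?_
      rw [hceq t ht] at hq
      have hm : min (q:ℝ) T ∈ Icc (0:ℝ) T := ⟨le_min (ht.1.trans hq.le) hT.le, min_le_right _ _⟩
      have hle : x n u t ≤ x n u (min (q:ℝ) T) :=
        (hx n).mono u hu ht hm (le_min hq.le ht.2)
      exact le_trans (ENNReal.ofReal_le_ofReal hle) (le_iSup (fun k => ENNReal.ofReal (x k u (min (q:ℝ) T))) n)
    calc x n u t = (ENNReal.ofReal (x n u t)).toReal :=
          (ENNReal.toReal_ofReal (hx0 n u hu t ht)).symm
      _ ≤ (Z u t).toReal := ENNReal.toReal_mono (hZfin u hu t) h1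
  -- the supremum is below every upper bound in `D_T^↑(L1)`
  have hub : ∀ w : ℝ → ℝ → ℝ, MemDTup T w →
      (∀ n : ℕ, ∀ u ∈ Icc (0:ℝ) 1, ∀ t ∈ Icc (0:ℝ) T, x n u t ≤ w u t) →
      ∀ u ∈ Icc (0:ℝ) 1, ∀ t ∈ Icc (0:ℝ) T, (Z u t).toReal ≤ w u t := by
    intro w hw hwx u hu t ht
    have hw0 : ∀ s ∈ Icc (0:ℝ) T, 0 ≤ w u s := fun s hs =>
      le_trans (hw.nonneg_zero u hu) (hw.mono u hu ⟨le_rfl, hT.le⟩ hs hs.1)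
    refine real_le_of_forall_pos_le_add fun ε hε => ?_
    rcases eq_or_lt_of_le ht.2 with hTt | htT
    · -- t = T
      have h1 : Z u t ≤ ENNReal.ofReal (w u t) := by
        refine le_trans (hZG u t) (iSup_le fun n => ENNReal.ofReal_le_ofReal ?_)
        rw [hTt]
        exact hwx n u hu T ⟨hT.le, le_rfl⟩
      have := ENNReal.toReal_le_of_le_ofReal (hw0 t ht) h1
      linarith
    · -- t < T : use right-continuity of w at t
      have hct := hw.memDT.rightCont u hu t ⟨ht.1, htT⟩
      have h1 : ∀ᶠ s in nhdsWithin t (Ici t), w u s < w u t + ε :=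
        hct.eventually (eventually_lt_nhds (by linarith : w u t < w u t + ε))
      have h2 : ∀ᶠ s in nhdsWithin t (Ici t), s < T :=
        mem_nhdsWithin_of_mem_nhds (Iio_mem_nhds htT)
      have h3 : ∀ᶠ s in nhdsWithin t (Ioi t), (w u s < w u t + ε ∧ s < T) ∧ s ∈ Ioi t :=
        (((h1.and h2).filter_mono (nhdsWithin_mono t Ioi_subset_Ici_self)).and
          self_mem_nhdsWithin)
      obtain ⟨s, ⟨hs1, hs2⟩, hs3⟩ := h3.exists
      obtain ⟨q, hq1, hq2⟩ := exists_rat_btwn (Set.mem_Ioi.mp hs3)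
      have hqT : (q:ℝ) < T := hq2.trans hs2
      have hsmem : s ∈ Icc (0:ℝ) T := ⟨ht.1.trans (le_of_lt hs3), hs2.le⟩
      have hqmem : (q:ℝ) ∈ Icc (0:ℝ) T := ⟨ht.1.trans hq1.le, hqT.le⟩
      have hZq : Z u t ≤ G u (min (q:ℝ) T) := by
        refine hZle u t q ?_
        rw [hceq t ht]; exact hq1
      rw [min_eq_left hqT.le] at hZq
      have hGq : G u (q:ℝ) ≤ ENNReal.ofReal (w u t + ε) := by
        refine iSup_le fun n => ENNReal.ofReal_le_ofReal ?_
        calc x n u (q:ℝ) ≤ w u (q:ℝ) := hwx n u hu _ hqmem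
          _ ≤ w u s := hw.mono u hu hqmem hsmem hq2.le
          _ ≤ w u t + ε := hs1.le
      have hnn : 0 ≤ w u t + ε := le_trans (hw0 t ht) (by linarith)
      exact ENNReal.toReal_le_of_le_ofReal hnn (hZq.trans hGq)
  have hzy : ∀ u ∈ Icc (0:ℝ) 1, ∀ t ∈ Icc (0:ℝ) T, (Z u t).toReal ≤ y u t :=
    hub y hy hmaj
  have hz0 : ∀ u ∈ Icc (0:ℝ) 1, ∀ t ∈ Icc (0:ℝ) T, 0 ≤ (Z u t).toReal := fun u hu t ht =>
    le_trans (hx0 0 u hu t ht) (hxz 0 u hu t ht)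
  have hy0 : ∀ u ∈ Icc (0:ℝ) 1, ∀ t ∈ Icc (0:ℝ) T, 0 ≤ y u t := fun u hu t ht =>
    le_trans (hy.nonneg_zero u hu) (hy.mono u hu ⟨le_rfl, hT.le⟩ ht ht.1)
  refine ⟨fun u t => (Z u t).toReal, ⟨⟨?_, ?_, ?_, ?_⟩, ?_, ?_⟩, ?_, ?_⟩
  · -- right continuity
    intro u hu t ht
    have hmono' := hzmono u hu
    have htt := Monotone.tendsto_nhdsGT hmono' t
    have hsInf : sInf ((fun s => (Z u s).toReal) '' Ioi t) = (Z u t).toReal := by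
      refine le_antisymm ?_ ?_
      · refine real_le_of_forall_pos_le_add fun ε hε => ?_
        have hfin := hZfin u hu t
        have hlt : Z u t < Z u t + ENNReal.ofReal ε :=
          ENNReal.lt_add_right hfin (by simp [ENNReal.ofReal_pos.2 hε, ne_of_gt, hε])
        have hlt2 : ⨅ (q : ℚ) (_ : c t < (q:ℝ)), G u (min (q:ℝ) T)
            < Z u t + ENNReal.ofReal ε := hlt
        obtain ⟨q, hq, hlt3⟩ : ∃ q : ℚ, c t < (q:ℝ) ∧
            G u (min (q:ℝ) T) < Z u t + ENNReal.ofReal ε := by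
          simpa [iInf_lt_iff] using hlt2
        rw [hceq t ⟨ht.1, ht.2.le⟩] at hq
        have hmin : t < min (q:ℝ) T := lt_min hq ht.2
        set s : ℝ := (t + min (q:ℝ) T) / 2 with hs
        have hs1 : t < s := by simp only [hs]; linarith
        have hs2 : s < min (q:ℝ) T := by simp only [hs]; linarith
        have hsmem : s ∈ Icc (0:ℝ) T :=
          ⟨ht.1.trans hs1.le, (hs2.trans_le (min_le_right _ _)).le⟩
        have hZs : Z u s ≤ G u (min (q:ℝ) T) := by
          refine hZle u s q ?_
          rw [hceq s hsmem]
          exact hs2.trans_le (min_le_left _ _)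
        have hGfin' : G u (min (q:ℝ) T) ≠ ⊤ :=
          hGfin u hu _ ⟨le_min (ht.1.trans hq.le) hT.le, min_le_right _ _⟩
        have hfs : (Z u s).toReal ≤ (Z u t).toReal + ε := by
          have h4 : (Z u s).toReal ≤ (G u (min (q:ℝ) T)).toReal :=
            ENNReal.toReal_mono hGfin' hZs
          have h5 : (G u (min (q:ℝ) T)).toReal ≤ (Z u t + ENNReal.ofReal ε).toReal :=
            ENNReal.toReal_mono (ENNReal.add_ne_top.2 ⟨hfin, ENNReal.ofReal_ne_top⟩) hlt3.le
          rw [ENNReal.toReal_add hfin ENNReal.ofReal_ne_top,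
            ENNReal.toReal_ofReal hε.le] at h5
          linarith
        refine le_trans (csInf_le ?_ ⟨s, hs1, rfl⟩) hfs
        exact ⟨(Z u t).toReal, by rintro b ⟨r, hr, rfl⟩; exact hmono' hr.le⟩
      · refine le_csInf ⟨(Z u (t+1)).toReal, ⟨t+1, by simp, rfl⟩⟩ ?_
        rintro b ⟨r, hr, rfl⟩
        exact hmono' hr.le
    rw [← continuousWithinAt_diff_self, Ici_sdiff_left]
    show Tendsto (fun s => (Z u s).toReal) (nhdsWithin t (Ioi t)) (nhds ((Z u t).toReal))
    rw [← hsInf]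
    exact htt
  · -- left limits
    intro u hu t ht
    exact ⟨_, Monotone.tendsto_nhdsLT (hzmono u hu) t⟩
  · -- measurability
    intro t ht
    refine ENNReal.measurable_toReal.comp (Measurable.iInf fun q => ?_)
    by_cases hq : c t < (q:ℝ)
    · have hm := hminmem t q hq
      simp only [iInf_pos hq]
      exact Measurable.iSup fun n =>
        ENNReal.measurable_ofReal.comp ((hx n).memDT.meas _ hm)
    · simp only [iInf_neg hq]
      exact measurable_const
  · -- finite norm
    refine ne_top_of_le_ne_top hy.memDT.finite
      (setLIntegral_mono' measurableSet_Icc fun u hu => ?_)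
    refine iSup₂_le fun t ht => ?_
    refine le_trans (ENNReal.ofReal_le_ofReal ?_) (le_iSup₂ (f := fun t _ =>
      ENNReal.ofReal |y u t|) t ht)
    rw [abs_of_nonneg (hz0 u hu t ht)]
    exact (hzy u hu t ht).trans (le_abs_self _)
  · -- nonneg at 0
    intro u hu
    exact hz0 u hu 0 ⟨le_rfl, hT.le⟩
  · -- monotone
    intro u hu
    exact (hzmono u hu).monotoneOn _
  · -- upper bound
    exact fun n u hu t ht => hxz n u hu t ht
  · -- least upper bound
    exact hub
end

section
/- Let N ≥ 1, let K_1 = [0, 1/N] and K_i = ((i−1)/N, i/N] for 2 ≤ i ≤ N, and for an N×N real matrix A define its blockwise-constant kernel A^N(u,v) = Σ_{i=1}^N Σ_{j=1}^N A_{ij} 1_{K_i}(u) 1_{K_j}(v). Then: (a) for any N×N real matrices A and B, the composition kernel (u,v) ↦ ∫₀¹ B^N(u,w) A^N(w,v) dw equals the blockwise-constant kernel of the matrix (1/N) B A, for all u, v ∈ [0,1]; (b) consequently, for any N×N matrix G with G_{ij} ≥ 0, setting P := (1/N) G and letting (G^N)^T denote the kernel (u,v) ↦ G^N(v,u) with k-fold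 composition ((G^N)^T)^(k) (defined by F^(1) = F and F^(n+1)(u,v) = ∫₀¹ F(u,w) F^(n)(w,v) dw), one has ‖((G^N)^T)^(k)‖_op = max_{1 ≤ i ≤ N} Σ_{j=1}^N (P^k)_{ij} for every k ≥ 1, where ‖F‖_op = sup_{v ∈ [0,1]} ∫₀¹ |F(u,v)| du. -/
open MeasureTheory Set Filter
open scoped ENNReal NNReal

noncomputable section

/-- The partition of `[0,1]`: `Kblock N 0 = [0, 1/N]`, and for `i ≥ 1` (0-based),
`Kblock N i = (i/N, (i+1)/N]` (corresponding to `K_{i+1} = (i/N, (i+1)/N]` in 1-based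
indexing). -/
def Kblock (N : ℕ) (i : Fin N) : Set ℝ :=
  if (i : ℕ) = 0 then Icc (0:ℝ) (1 / (N : ℝ))
  else Ioc (((i : ℕ) : ℝ) / (N : ℝ)) ((((i : ℕ) : ℝ) + 1) / (N : ℝ))

/-- The blockwise-constant kernel associated with an `N×N` matrix. -/
def blockKernel (N : ℕ) (G : Matrix (Fin N) (Fin N) ℝ) : ℝ → ℝ → ℝ :=
  fun u v => ∑ i : Fin N, ∑ j : Fin N,
    G i j * (Kblock N i).indicator (fun _ => (1:ℝ)) u
      * (Kblock N j).indicator (fun _ => (1:ℝ)) v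

end

section helpers
variable {N : ℕ}

lemma Kblock_measurableSet (i : Fin N) : MeasurableSet (Kblock N i) := by
  unfold Kblock; split
  · exact measurableSet_Icc
  · exact measurableSet_Ioc

lemma Kblock_subset (hN : 1 ≤ N) (i : Fin N) : Kblock N i ⊆ Icc (0:ℝ) 1 := by
  have hN0 : (0:ℝ) < N := by exact_mod_cast Nat.pos_of_ne_zero (by omega)
  have hle : ((i:ℕ):ℝ) + 1 ≤ N := by exact_mod_cast Nat.succ_le_of_lt i.2
  unfold Kblock; split
  · apply Icc_subset_Icc le_rfl
    rw [div_le_one hN0]; exact_mod_cast hN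
  · intro x hx
    constructor
    · exact le_trans (div_nonneg (by positivity) hN0.le) hx.1.le
    · exact hx.2.trans (by rw [div_le_one hN0]; exact hle)

lemma Kblock_volume (hN : 1 ≤ N) (i : Fin N) :
    volume (Kblock N i) = ENNReal.ofReal (1 / (N:ℝ)) := by
  have hN0 : (0:ℝ) < N := by exact_mod_cast Nat.pos_of_ne_zero (by omega)
  unfold Kblock; split
  · rw [Real.volume_Icc, sub_zero]
  · rw [Real.volume_Ioc]
    congr 1
    field_simp
    ring

lemma Kblock_upper {i : Fin N} {x : ℝ} (hx : x ∈ Kblock N i) : x ≤ (((i:ℕ):ℝ) + 1) / N := by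
  unfold Kblock at hx; split at hx
  · rename_i h
    have h0 : ((i:ℕ):ℝ) = 0 := by exact_mod_cast h
    rw [h0]
    exact le_trans hx.2 (by norm_num)
  · exact hx.2

lemma Kblock_disjoint_aux (hN : 1 ≤ N) {i j : Fin N} (hij : (i:ℕ) < (j:ℕ)) {x : ℝ}
    (hxi : x ∈ Kblock N i) (hxj : x ∈ Kblock N j) : False := by
  have hN0 : (0:ℝ) < N := by exact_mod_cast Nat.pos_of_ne_zero (by omega)
  have hj0 : (j:ℕ) ≠ 0 := by omega
  have hxj' : ((j:ℕ):ℝ) / N < x := by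
    unfold Kblock at hxj; rw [if_neg hj0] at hxj; exact hxj.1
  have h1 : x ≤ (((i:ℕ):ℝ) + 1) / N := Kblock_upper hxi
  have h2 : (((i:ℕ):ℝ) + 1) ≤ ((j:ℕ):ℝ) := by exact_mod_cast hij
  have h3 : (((i:ℕ):ℝ) + 1) / N ≤ ((j:ℕ):ℝ) / N := by gcongr
  linarith

lemma Kblock_disjoint (hN : 1 ≤ N) {i j : Fin N} (hij : i ≠ j) :
    Disjoint (Kblock N i) (Kblock N j) := by
  rw [Set.disjoint_left]
  intro x hxi hxj
  rcases lt_or_gt_of_ne (fun h => hij (Fin.ext h) : (i:ℕ) ≠ (j:ℕ)) with h | h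
  · exact Kblock_disjoint_aux hN h hxi hxj
  · exact Kblock_disjoint_aux hN h hxj hxi

lemma Kblock_mem_witness (hN : 1 ≤ N) (j : Fin N) :
    (((j:ℕ):ℝ) + 1) / N ∈ Kblock N j := by
  have hN0 : (0:ℝ) < N := by exact_mod_cast Nat.pos_of_ne_zero (by omega)
  unfold Kblock; split
  · rename_i h; rw [h]
    constructor
    · positivity
    · norm_num
  · constructor
    · gcongr
      linarith
    · exact le_rfl

lemma Kblock_exists (hN : 1 ≤ N) {v : ℝ} (hv : v ∈ Icc (0:ℝ) 1) :
    ∃ j : Fin N, v ∈ Kblock N j := by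
  have hN0 : (0:ℝ) < N := by exact_mod_cast Nat.pos_of_ne_zero (by omega)
  by_cases h : v ≤ 1 / N
  · refine ⟨⟨0, by omega⟩, ?_⟩
    unfold Kblock; rw [if_pos rfl]; exact ⟨hv.1, h⟩
  · push_neg at h
    have hvN : 1 < v * N := (div_lt_iff₀ hN0).mp h
    set m := ⌈v * N⌉₊ - 1 with hm
    have hc2 : 2 ≤ ⌈v * N⌉₊ := Nat.lt_ceil.mpr (by exact_mod_cast hvN)
    have hcle : ⌈v * N⌉₊ ≤ N := Nat.ceil_le.mpr (by nlinarith [hv.2])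
    have hmN : m < N := by omega
    refine ⟨⟨m, hmN⟩, ?_⟩
    have hm0 : m ≠ 0 := by omega
    unfold Kblock
    rw [if_neg hm0]
    have hmcast : ((m:ℕ):ℝ) = (⌈v * N⌉₊ : ℝ) - 1 := by
      rw [hm]; push_cast [Nat.cast_sub (by omega : 1 ≤ ⌈v * N⌉₊)]; ring
    constructor
    · rw [div_lt_iff₀ hN0, hmcast]
      have := Nat.ceil_lt_add_one (by positivity : (0:ℝ) ≤ v * N)
      linarith
    · rw [le_div_iff₀ hN0, hmcast]
      have := Nat.le_ceil (v * N)
      have : v * N ≤ (⌈v * N⌉₊:ℝ) := this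
      linarith

end helpers

section part_a
variable {N : ℕ}

noncomputable def Ind (N : ℕ) (i : Fin N) : ℝ → ℝ :=
  (Kblock N i).indicator (fun _ => (1:ℝ))

lemma blockKernel_eq_Ind (M : Matrix (Fin N) (Fin N) ℝ) (u v : ℝ) :
    blockKernel N M u v = ∑ i : Fin N, ∑ j : Fin N, M i j * Ind N i u * Ind N j v := rfl

lemma Ind_integrable (i : Fin N) :
    IntegrableOn (Ind N i) (Icc (0:ℝ) 1) := by
  apply Integrable.indicator
  · exact integrableOn_const (by simp [Real.volume_Icc])
  · exact Kblock_measurableSet i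

lemma Ind_mul_integrable (i j : Fin N) (c : ℝ) :
    IntegrableOn (fun w => c * (Ind N i w * Ind N j w)) (Icc (0:ℝ) 1) := by
  have : (fun w => Ind N i w * Ind N j w)
      = (Kblock N i ∩ Kblock N j).indicator (fun _ => (1:ℝ)) := by
    funext w
    rw [show (1:ℝ) = 1 * 1 by norm_num]
    exact (Set.inter_indicator_mul (fun _ => (1:ℝ)) (fun _ => (1:ℝ)) w).symm
  apply Integrable.const_mul
  rw [this]
  apply Integrable.indicator
  · exact integrableOn_const (by simp [Real.volume_Icc])
  · exact ((Kblock_measurableSet i).inter (Kblock_measurableSet j))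

lemma Ind_mul_integral (hN : 1 ≤ N) (i j : Fin N) :
    ∫ w in Icc (0:ℝ) 1, Ind N i w * Ind N j w
      = if i = j then 1 / (N:ℝ) else 0 := by
  have key : (fun w => Ind N i w * Ind N j w)
      = (Kblock N i ∩ Kblock N j).indicator (fun _ => (1:ℝ)) := by
    funext w
    rw [show (Ind N i w * Ind N j w : ℝ) = (Kblock N i).indicator (fun _ => (1:ℝ)) w * (Kblock N j).indicator (fun _ => (1:ℝ)) w from rfl,
      ← Set.inter_indicator_mul]
    norm_num
  have : (∫ w in Icc (0:ℝ) 1, Ind N i w * Ind N j w)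
      = ∫ w in Icc (0:ℝ) 1, (Kblock N i ∩ Kblock N j).indicator (fun _ => (1:ℝ)) w := by
    rw [key]
  rw [this, setIntegral_indicator ((Kblock_measurableSet i).inter (Kblock_measurableSet j)),
    setIntegral_const]
  by_cases hij : i = j
  · subst hij
    rw [if_pos rfl, Set.inter_self,
      Set.inter_eq_self_of_subset_right (Kblock_subset hN i),
      measureReal_def, Kblock_volume hN i, ENNReal.toReal_ofReal (by positivity)]
    simp
  · rw [if_neg hij, (Kblock_disjoint hN hij).inter_eq]
    simp

end part_a

section part_a2
variable {N : ℕ}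

lemma blockKernel_comp (hN : 1 ≤ N) (A B : Matrix (Fin N) (Fin N) ℝ) (u v : ℝ) :
    kernelComp (blockKernel N B) (blockKernel N A) u v
      = blockKernel N ((1 / (N:ℝ)) • (B * A)) u v := by
  classical
  set f : Fin N → ℝ := fun j => ∑ i, B i j * Ind N i u with hf
  set g : Fin N → ℝ := fun p => ∑ q, A p q * Ind N q v with hg
  have hprod : ∀ w, blockKernel N B u w * blockKernel N A w v
      = ∑ j, ∑ p, (f j * g p) * (Ind N j w * Ind N p w) := by
    intro w
    have hB : blockKernel N B u w = ∑ j, f j * Ind N j w := by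
      rw [blockKernel_eq_Ind, Finset.sum_comm]
      exact Finset.sum_congr rfl fun j _ => by rw [hf, Finset.sum_mul]
    have hA : blockKernel N A w v = ∑ p, g p * Ind N p w := by
      rw [blockKernel_eq_Ind]
      refine Finset.sum_congr rfl fun p _ => ?_
      rw [hg, Finset.sum_mul]
      exact Finset.sum_congr rfl fun q _ => by ring
    rw [hB, hA, Finset.sum_mul_sum]
    exact Finset.sum_congr rfl fun j _ => Finset.sum_congr rfl fun p _ => by ring
  have step1 : kernelComp (blockKernel N B) (blockKernel N A) u v
      = ∑ j, ∑ p, (f j * g p) * ∫ w in Icc (0:ℝ) 1, Ind N j w * Ind N p w := by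
    unfold kernelComp
    rw [show (fun w => blockKernel N B u w * blockKernel N A w v)
        = fun w => ∑ j, ∑ p, (f j * g p) * (Ind N j w * Ind N p w) from funext hprod]
    rw [integral_finset_sum _ (fun j _ =>
      integrable_finset_sum _ (fun p _ => Ind_mul_integrable j p _))]
    refine Finset.sum_congr rfl fun j _ => ?_
    rw [integral_finset_sum _ (fun p _ => Ind_mul_integrable j p _)]
    exact Finset.sum_congr rfl fun p _ => integral_const_mul _ _
  rw [step1]
  have step2 : ∀ j : Fin N, ∑ p : Fin N,
      (f j * g p) * ∫ w in Icc (0:ℝ) 1, Ind N j w * Ind N p w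
      = f j * g j * (1 / (N:ℝ)) := by
    intro j
    have : ∀ p : Fin N, (f j * g p) * ∫ w in Icc (0:ℝ) 1, Ind N j w * Ind N p w
        = if j = p then f j * g p * (1 / (N:ℝ)) else 0 := by
      intro p
      rw [Ind_mul_integral hN j p]
      split <;> simp
    rw [Finset.sum_congr rfl fun p _ => this p]
    simp
  rw [Finset.sum_congr rfl fun j _ => step2 j]
  rw [blockKernel_eq_Ind]
  have rhs : ∀ i q : Fin N, ((1 / (N:ℝ)) • (B * A)) i q * Ind N i u * Ind N q v
      = ∑ j : Fin N, (B i j * Ind N i u) * ((A j q * Ind N q v) * (1 / (N:ℝ))) := by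
    intro i q
    rw [Matrix.smul_apply, Matrix.mul_apply, smul_eq_mul, Finset.mul_sum,
      Finset.sum_mul, Finset.sum_mul]
    exact Finset.sum_congr rfl fun j _ => by ring
  rw [Finset.sum_congr rfl fun i _ => Finset.sum_congr rfl fun q _ => rhs i q]
  have swap1 : ∀ t : Fin N → Fin N → Fin N → ℝ,
      (∑ i : Fin N, ∑ q : Fin N, ∑ j : Fin N, t i q j)
        = ∑ j : Fin N, ∑ i : Fin N, ∑ q : Fin N, t i q j := by
    intro t
    rw [show (∑ i : Fin N, ∑ q : Fin N, ∑ j : Fin N, t i q j)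
        = ∑ i : Fin N, ∑ j : Fin N, ∑ q : Fin N, t i q j from
      Finset.sum_congr rfl fun i _ => Finset.sum_comm]
    exact Finset.sum_comm
  rw [swap1]
  refine Finset.sum_congr rfl fun j _ => ?_
  rw [hf, hg, Finset.sum_mul_sum, Finset.sum_mul]
  refine Finset.sum_congr rfl fun i _ => ?_
  rw [Finset.sum_mul]
  exact Finset.sum_congr rfl fun q _ => by ring

end part_a2

section part_b
variable {N : ℕ}

lemma blockKernel_transpose (G : Matrix (Fin N) (Fin N) ℝ) :
    (fun u v => blockKernel N G v u) = blockKernel N G.transpose := by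
  funext u v
  rw [show blockKernel N G v u = ∑ i : Fin N, ∑ j : Fin N, G i j * Ind N i v * Ind N j u from rfl,
    blockKernel_eq_Ind, Finset.sum_comm]
  exact Finset.sum_congr rfl fun j _ => Finset.sum_congr rfl fun i _ => by
    rw [Matrix.transpose_apply]; ring

lemma blockKernel_iter (hN : 1 ≤ N) (C : Matrix (Fin N) (Fin N) ℝ) (n : ℕ) :
    kernelIter (blockKernel N C) n
      = blockKernel N ((1 / (N:ℝ)) ^ n • C ^ (n + 1)) := by
  induction n with
  | zero => simp [kernelIter]
  | succ n ih =>
    funext u v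
    show kernelComp (blockKernel N C) (kernelIter (blockKernel N C) n) u v = _
    rw [ih, blockKernel_comp hN]
    congr 1
    rw [Matrix.mul_smul, smul_smul, ← pow_succ']
    congr 1
    rw [← pow_succ']

lemma matrix_pow_nonneg {G : Matrix (Fin N) (Fin N) ℝ} (hG : ∀ i j, 0 ≤ G i j) (k : ℕ) :
    ∀ i j, 0 ≤ (G ^ k) i j := by
  induction k with
  | zero =>
    intro i j
    rw [pow_zero, Matrix.one_apply]
    split <;> norm_num
  | succ k ih =>
    intro i j
    rw [pow_succ, Matrix.mul_apply]
    exact Finset.sum_nonneg fun p _ => mul_nonneg (ih i p) (hG p j)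

lemma Ind_nonneg (i : Fin N) (u : ℝ) : 0 ≤ Ind N i u := by
  unfold Ind
  exact Set.indicator_nonneg (fun _ _ => zero_le_one) u

lemma Ind_eq (hN : 1 ≤ N) {j p : Fin N} {v : ℝ} (hv : v ∈ Kblock N j) :
    Ind N p v = if p = j then 1 else 0 := by
  by_cases h : p = j
  · subst h
    simp [Ind, Set.indicator_of_mem hv]
  · have : v ∉ Kblock N p := fun hv' => (Kblock_disjoint hN h).le_bot ⟨hv', hv⟩
    simp [Ind, Set.indicator_of_notMem this, h]

lemma blockKernel_apply_of_mem (hN : 1 ≤ N) (M : Matrix (Fin N) (Fin N) ℝ)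
    {j : Fin N} {v : ℝ} (hv : v ∈ Kblock N j) (u : ℝ) :
    blockKernel N M u v = ∑ i : Fin N, M i j * Ind N i u := by
  rw [blockKernel_eq_Ind]
  refine Finset.sum_congr rfl fun i _ => ?_
  have : (∑ p : Fin N, M i p * Ind N i u * Ind N p v)
      = ∑ p : Fin N, M i p * Ind N i u * (if p = j then 1 else 0) :=
    Finset.sum_congr rfl fun p _ => by rw [Ind_eq hN hv]
  rw [this]
  simp

lemma lintegral_block (hN : 1 ≤ N) (M : Matrix (Fin N) (Fin N) ℝ)
    (hM : ∀ i j, 0 ≤ M i j) {j : Fin N} {v : ℝ} (hv : v ∈ Kblock N j) :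
    ∫⁻ u in Icc (0:ℝ) 1, ENNReal.ofReal |blockKernel N M u v|
      = ENNReal.ofReal ((1/(N:ℝ)) * ∑ i : Fin N, M i j) := by
  have habs : ∀ u, ENNReal.ofReal |blockKernel N M u v|
      = ∑ i : Fin N, (Kblock N i).indicator (fun _ => ENNReal.ofReal (M i j)) u := by
    intro u
    rw [blockKernel_apply_of_mem hN M hv u,
      abs_of_nonneg (Finset.sum_nonneg fun i _ => mul_nonneg (hM i j) (Ind_nonneg i u)),
      ENNReal.ofReal_sum_of_nonneg (fun i _ => mul_nonneg (hM i j) (Ind_nonneg i u))]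
    refine Finset.sum_congr rfl fun i _ => ?_
    by_cases h : u ∈ Kblock N i
    · simp [Ind, Set.indicator_of_mem h]
    · simp [Ind, Set.indicator_of_notMem h]
  simp_rw [habs]
  rw [lintegral_finset_sum _ (fun i _ =>
    (measurable_const.indicator (Kblock_measurableSet i)))]
  have hterm : ∀ i : Fin N,
      ∫⁻ u in Icc (0:ℝ) 1, (Kblock N i).indicator (fun _ => ENNReal.ofReal (M i j)) u
        = ENNReal.ofReal (M i j / N) := by
    intro i
    rw [lintegral_indicator (Kblock_measurableSet i),
      Measure.restrict_restrict (Kblock_measurableSet i),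
      lintegral_const, Measure.restrict_apply MeasurableSet.univ, Set.univ_inter,
      Set.inter_eq_self_of_subset_left (Kblock_subset hN i), Kblock_volume hN i,
      ← ENNReal.ofReal_mul (hM i j)]
    congr 1
    ring
  rw [Finset.sum_congr rfl fun i _ => hterm i,
    ← ENNReal.ofReal_sum_of_nonneg (fun i _ => div_nonneg (hM i j) (Nat.cast_nonneg N))]
  congr 1
  rw [Finset.mul_sum]
  exact Finset.sum_congr rfl fun i _ => by ring

lemma opNorm_blockKernel (hN : 1 ≤ N) (M : Matrix (Fin N) (Fin N) ℝ)
    (hM : ∀ i j, 0 ≤ M i j) :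
    kernelOpNorm (blockKernel N M)
      = ENNReal.ofReal (⨆ j : Fin N, (1/(N:ℝ)) * ∑ i : Fin N, M i j) := by
  haveI : Nonempty (Fin N) := ⟨⟨0, by omega⟩⟩
  set x : Fin N → ℝ := fun j => (1/(N:ℝ)) * ∑ i : Fin N, M i j with hx
  obtain ⟨j0, hj0⟩ := Finite.exists_max x
  have hsup : (⨆ j, x j) = x j0 :=
    le_antisymm (ciSup_le hj0) (le_ciSup (Finite.bddAbove_range x) j0)
  rw [hsup]
  unfold kernelOpNorm
  apply le_antisymm
  · refine iSup₂_le fun v hv => ?_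
    obtain ⟨j, hj⟩ := Kblock_exists hN hv
    rw [lintegral_block hN M hM hj]
    exact ENNReal.ofReal_le_ofReal (hj0 j)
  · have hw : (((j0:ℕ):ℝ)+1)/N ∈ Icc (0:ℝ) 1 :=
      Kblock_subset hN j0 (Kblock_mem_witness hN j0)
    refine le_trans ?_ (le_iSup₂
      (f := fun v (_ : v ∈ Icc (0:ℝ) 1) =>
        ∫⁻ u in Icc (0:ℝ) 1, ENNReal.ofReal |blockKernel N M u v|) _ hw)
    rw [lintegral_block hN M hM (Kblock_mem_witness hN j0)]

end part_b

/-- (a) composition of blockwise-constant kernels corresponds to the matrix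
product scaled by `1/N`; (b) consequently, for a nonnegative matrix `G` with
`P = (1/N) G`, the `k`-fold composition of the transposed block kernel has operator norm
`max_i Σ_j (P^k)_{ij}`. -/
theorem blockKernel_composition_matrix
    (N : ℕ) (hN : 1 ≤ N) :
    (∀ A B : Matrix (Fin N) (Fin N) ℝ, ∀ u ∈ Icc (0:ℝ) 1, ∀ v ∈ Icc (0:ℝ) 1,
      kernelComp (blockKernel N B) (blockKernel N A) u v
        = blockKernel N ((1 / (N : ℝ)) • (B * A)) u v) ∧
    (∀ G : Matrix (Fin N) (Fin N) ℝ, (∀ i j, 0 ≤ G i j) → ∀ k : ℕ, 1 ≤ k →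
      kernelOpNorm (kernelIter (fun u v => blockKernel N G v u) (k - 1))
        = ENNReal.ofReal
            (⨆ i : Fin N, ∑ j : Fin N, (((1 / (N : ℝ)) • G) ^ k) i j)) := by
  constructor
  · intro A B u _ v _
    exact blockKernel_comp hN A B u v
  · intro G hG k hk
    have hk1 : k - 1 + 1 = k := by omega
    have hnn : ∀ i j, 0 ≤ ((1 / (N:ℝ)) ^ (k-1) • G.transpose ^ k) i j := by
      intro i j
      rw [Matrix.smul_apply, smul_eq_mul]
      exact mul_nonneg (by positivity)
        (matrix_pow_nonneg (fun i j => hG j i) k i j)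
    rw [blockKernel_transpose, blockKernel_iter hN, hk1, opNorm_blockKernel hN _ hnn]
    have key : ∀ j : Fin N,
        (1/(N:ℝ)) * ∑ i : Fin N, ((1 / (N:ℝ)) ^ (k-1) • G.transpose ^ k) i j
          = ∑ p : Fin N, (((1 / (N:ℝ)) • G) ^ k) j p := by
      intro j
      rw [smul_pow, Finset.mul_sum]
      refine Finset.sum_congr rfl fun i _ => ?_
      rw [Matrix.smul_apply, Matrix.smul_apply, smul_eq_mul, smul_eq_mul,
        ← Matrix.transpose_pow, Matrix.transpose_apply, ← mul_assoc, ← pow_succ', hk1]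
    congr 1
    exact iSup_congr key
end
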